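/- arXiv:2002.07926 — 4 statements merged into one kernel-verified Lean document; each statement's English description precedes it below -/
import Mathlib

section
/- Let (A₀, ⟪·,·⟫₁) and (B₀, ⟪·,·⟫₂) be unital Hilbert algebras over ℂ. Endow the algebraic tensor product A₀ ⊗[ℂ] B₀ with the tensor product *-algebra structure and with the sesquilinear form B determined by B(x ⊗ y, x' ⊗ y') = ⟪x, x'⟫₁⟪y, y'⟫₂. Then A₀ ⊗[ℂ] B₀ is again a unital Hilbert algebra; that is: B is a Hermitian, positive-definite inner product on A₀ ⊗[ℂ] B₀, and with respect to the norm ‖·‖_B induced by B one has (1) for every z ∈ A₀ ⊗[ℂ] B₀ the left multiplication map w ↦ zw is continuous, (2) B(zw, v) = B(w, z*v) for all z, w, v, (3) B(z, w) = B(w*, z*) for all z, w, and (4) the linear span of products {zw : z, w ∈ A₀ ⊗[ℂ] B₀} is ‖·‖_B-dense in A₀ ⊗[ℂ] B₀. -/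
open scoped TensorProduct ComplexConjugate



theorem orthoRep_right {M N : Type*} [AddCommGroup M] [Module ℂ M]
    [NormedAddCommGroup N] [InnerProductSpace ℂ N] (z : M ⊗[ℂ] N) :
    ∃ (m : ℕ) (x : Fin m → M) (y : Fin m → N), Orthonormal ℂ y ∧ z = ∑ j, x j ⊗ₜ[ℂ] y j := by
  classical
  obtain ⟨S, rfl⟩ := TensorProduct.exists_finset z
  set V : Submodule ℂ N := Submodule.span ℂ ((S.image Prod.snd : Finset N) : Set N) with hVdef
  have hV : FiniteDimensional ℂ V :=
    FiniteDimensional.span_of_finite ℂ (S.image Prod.snd).finite_toSet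
  set b := stdOrthonormalBasis ℂ V with hb
  set m := Module.finrank ℂ V with hm
  have hmem : ∀ p ∈ S, p.2 ∈ V := fun p hp =>
    Submodule.subset_span (by exact Finset.mem_coe.2 (Finset.mem_image_of_mem Prod.snd hp))
  refine ⟨m, fun j => ∑ p ∈ S.attach, (b.repr ⟨p.1.2, hmem p.1 p.2⟩ j) • p.1.1,
    fun j => (b j : N), ?_, ?_⟩
  · rw [orthonormal_iff_ite]
    intro i j
    rw [← Submodule.coe_inner]
    exact orthonormal_iff_ite.1 b.orthonormal i j
  · rw [← Finset.sum_attach S (fun p => p.1 ⊗ₜ[ℂ] p.2)]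
    refine Eq.symm ?_
    calc ∑ j, (∑ p ∈ S.attach, (b.repr ⟨p.1.2, hmem p.1 p.2⟩ j) • p.1.1) ⊗ₜ[ℂ] (b j : N)
        = ∑ j, ∑ p ∈ S.attach, ((b.repr ⟨p.1.2, hmem p.1 p.2⟩ j) • p.1.1) ⊗ₜ[ℂ] (b j : N) := by
          simp_rw [TensorProduct.sum_tmul]
      _ = ∑ p ∈ S.attach, ∑ j, (b.repr ⟨p.1.2, hmem p.1 p.2⟩ j) • (p.1.1 ⊗ₜ[ℂ] (b j : N)) := by
          rw [Finset.sum_comm]; simp_rw [TensorProduct.smul_tmul']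
      _ = ∑ p ∈ S.attach, p.1.1 ⊗ₜ[ℂ] (∑ j, (b.repr ⟨p.1.2, hmem p.1 p.2⟩ j) • (b j : N)) := by
          simp_rw [TensorProduct.tmul_sum, TensorProduct.tmul_smul]
      _ = ∑ p ∈ S.attach, p.1.1 ⊗ₜ[ℂ] p.1.2 := by
          refine Finset.sum_congr rfl fun p _ => ?_
          congr 1
          have := b.sum_repr ⟨p.1.2, hmem p.1 p.2⟩
          calc ∑ j, (b.repr ⟨p.1.2, hmem p.1 p.2⟩ j) • (b j : N)
              = ((∑ j, (b.repr ⟨p.1.2, hmem p.1 p.2⟩ j) • b j : V) : N) := by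
                push_cast; rfl
            _ = p.1.2 := by rw [this]

theorem orthoRep_left {M N : Type*} [NormedAddCommGroup M] [InnerProductSpace ℂ M]
    [AddCommGroup N] [Module ℂ N] (z : M ⊗[ℂ] N) :
    ∃ (m : ℕ) (x : Fin m → M) (y : Fin m → N), Orthonormal ℂ x ∧ z = ∑ j, x j ⊗ₜ[ℂ] y j := by
  classical
  obtain ⟨S, rfl⟩ := TensorProduct.exists_finset z
  set V : Submodule ℂ M := Submodule.span ℂ ((S.image Prod.fst : Finset M) : Set M) with hVdef
  have hV : FiniteDimensional ℂ V :=
    FiniteDimensional.span_of_finite ℂ (S.image Prod.fst).finite_toSet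
  set b := stdOrthonormalBasis ℂ V with hb
  set m := Module.finrank ℂ V with hm
  have hmem : ∀ p ∈ S, p.1 ∈ V := fun p hp =>
    Submodule.subset_span (by exact Finset.mem_coe.2 (Finset.mem_image_of_mem Prod.fst hp))
  refine ⟨m, fun j => (b j : M),
    fun j => ∑ p ∈ S.attach, (b.repr ⟨p.1.1, hmem p.1 p.2⟩ j) • p.1.2, ?_, ?_⟩
  · rw [orthonormal_iff_ite]
    intro i j
    rw [← Submodule.coe_inner]
    exact orthonormal_iff_ite.1 b.orthonormal i j
  · rw [← Finset.sum_attach S (fun p => p.1 ⊗ₜ[ℂ] p.2)]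
    refine Eq.symm ?_
    calc ∑ j, (b j : M) ⊗ₜ[ℂ] (∑ p ∈ S.attach, (b.repr ⟨p.1.1, hmem p.1 p.2⟩ j) • p.1.2)
        = ∑ j, ∑ p ∈ S.attach, (b j : M) ⊗ₜ[ℂ] ((b.repr ⟨p.1.1, hmem p.1 p.2⟩ j) • p.1.2) := by
          simp_rw [TensorProduct.tmul_sum]
      _ = ∑ p ∈ S.attach, ∑ j, (b.repr ⟨p.1.1, hmem p.1 p.2⟩ j) • ((b j : M) ⊗ₜ[ℂ] p.1.2) := by
          rw [Finset.sum_comm]; simp_rw [TensorProduct.tmul_smul]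
      _ = ∑ p ∈ S.attach, (∑ j, (b.repr ⟨p.1.1, hmem p.1 p.2⟩ j) • (b j : M)) ⊗ₜ[ℂ] p.1.2 := by
          simp_rw [TensorProduct.sum_tmul, TensorProduct.smul_tmul']
      _ = ∑ p ∈ S.attach, p.1.1 ⊗ₜ[ℂ] p.1.2 := by
          refine Finset.sum_congr rfl fun p _ => ?_
          congr 1
          have := b.sum_repr ⟨p.1.1, hmem p.1 p.2⟩
          calc ∑ j, (b.repr ⟨p.1.1, hmem p.1 p.2⟩ j) • (b j : M)
              = ((∑ j, (b.repr ⟨p.1.1, hmem p.1 p.2⟩ j) • b j : V) : M) := by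
                push_cast; rfl
            _ = p.1.1 := by rw [this]


section Aux3

variable {F : Type*} [AddCommGroup F] [Module ℂ F]

theorem core_sqrt_eq_norm (c : InnerProductSpace.Core ℂ F) (x : F) :
    letI := c.toNormedAddCommGroup
    Real.sqrt (c.inner x x).re = ‖x‖ := rfl

theorem core_sqrt_sum_le (c : InnerProductSpace.Core ℂ F) {ι : Type*} (s : Finset ι)
    (f : ι → F) :
    Real.sqrt (c.inner (∑ i ∈ s, f i) (∑ i ∈ s, f i)).re
      ≤ ∑ i ∈ s, Real.sqrt (c.inner (f i) (f i)).re := by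
  letI := c.toNormedAddCommGroup
  have key : ∀ u : F, Real.sqrt (c.inner u u).re = ‖u‖ := fun u => rfl
  simp only [key]
  exact norm_sum_le s f

theorem core_sqrt_add_le (c : InnerProductSpace.Core ℂ F) (u v : F) :
    Real.sqrt (c.inner (u + v) (u + v)).re
      ≤ Real.sqrt (c.inner u u).re + Real.sqrt (c.inner v v).re := by
  letI := c.toNormedAddCommGroup
  have key : ∀ u : F, Real.sqrt (c.inner u u).re = ‖u‖ := fun u => rfl
  simp only [key]
  exact norm_add_le u v

theorem core_sqrt_sub_le (c : InnerProductSpace.Core ℂ F) (u v : F) :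
    Real.sqrt (c.inner v v).re
      ≤ Real.sqrt (c.inner u u).re + Real.sqrt (c.inner (u - v) (u - v)).re := by
  letI := c.toNormedAddCommGroup
  have key : ∀ u : F, Real.sqrt (c.inner u u).re = ‖u‖ := fun u => rfl
  simp only [key]
  calc ‖v‖ = ‖u - (u - v)‖ := by rw [sub_sub_cancel]
    _ ≤ ‖u‖ + ‖u - v‖ := norm_sub_le _ _

theorem core_inner_self_im (c : InnerProductSpace.Core ℂ F) (x : F) :
    (c.inner x x).im = 0 :=
  Complex.conj_eq_iff_im.mp (c.conj_inner_symm x x)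

theorem core_inner_self_nonneg (c : InnerProductSpace.Core ℂ F) (x : F) :
    0 ≤ (c.inner x x).re := c.re_inner_nonneg x

end Aux3

section Aux4

variable {M N : Type*} [AddCommGroup M] [Module ℂ M] [AddCommGroup N] [Module ℂ N]

theorem orthoRepCore_right (cN : InnerProductSpace.Core ℂ N) (z : M ⊗[ℂ] N) :
    ∃ (m : ℕ) (x : Fin m → M) (y : Fin m → N),
      (∀ i j, cN.inner (y i) (y j) = if i = j then 1 else 0) ∧ z = ∑ j, x j ⊗ₜ[ℂ] y j := by
  letI := cN.toNormedAddCommGroup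
  letI := InnerProductSpace.ofCore cN.toCore
  obtain ⟨m, x, y, hy, hz⟩ := orthoRep_right (M := M) (N := N) z
  refine ⟨m, x, y, fun i j => ?_, hz⟩
  have h1 : cN.inner (y i) (y j) = (inner ℂ (y i) (y j) : ℂ) := rfl
  rw [h1]
  exact orthonormal_iff_ite.mp hy i j

theorem orthoRepCore_left (cM : InnerProductSpace.Core ℂ M) (z : M ⊗[ℂ] N) :
    ∃ (m : ℕ) (x : Fin m → M) (y : Fin m → N),
      (∀ i j, cM.inner (x i) (x j) = if i = j then 1 else 0) ∧ z = ∑ j, x j ⊗ₜ[ℂ] y j := by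
  letI := cM.toNormedAddCommGroup
  letI := InnerProductSpace.ofCore cM.toCore
  obtain ⟨m, x, y, hx, hz⟩ := orthoRep_left (M := M) (N := N) z
  refine ⟨m, x, y, fun i j => ?_, hz⟩
  have h1 : cM.inner (x i) (x j) = (inner ℂ (x i) (x j) : ℂ) := rfl
  rw [h1]
  exact orthonormal_iff_ite.mp hx i j

end Aux4


section Aux2

variable {M N : Type*} [AddCommGroup M] [Module ℂ M] [AddCommGroup N] [Module ℂ N]
  (cM : InnerProductSpace.Core ℂ M) (cN : InnerProductSpace.Core ℂ N)
  (Bf : M ⊗[ℂ] N → M ⊗[ℂ] N → ℂ)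

theorem Bf_zero_left (Bf_add_left : ∀ z z' w, Bf (z + z') w = Bf z w + Bf z' w)
    (w : M ⊗[ℂ] N) : Bf 0 w = 0 := by
  have h := Bf_add_left 0 0 w
  rw [add_zero] at h
  exact add_eq_left.mp h.symm

theorem Bf_zero_right (Bf_add_right : ∀ z w w', Bf z (w + w') = Bf z w + Bf z w')
    (w : M ⊗[ℂ] N) : Bf w 0 = 0 := by
  have h := Bf_add_right w 0 0
  rw [add_zero] at h
  exact add_eq_left.mp h.symm

theorem Bf_sum_left (Bf_add_left : ∀ z z' w, Bf (z + z') w = Bf z w + Bf z' w)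
    {ι : Type*} (s : Finset ι) (f : ι → M ⊗[ℂ] N) (w : M ⊗[ℂ] N) :
    Bf (∑ i ∈ s, f i) w = ∑ i ∈ s, Bf (f i) w := by
  classical
  induction s using Finset.induction_on with
  | empty => simpa using Bf_zero_left Bf Bf_add_left w
  | insert a s h ih => rw [Finset.sum_insert h, Finset.sum_insert h, Bf_add_left, ih]

theorem Bf_sum_right (Bf_add_right : ∀ z w w', Bf z (w + w') = Bf z w + Bf z w')
    {ι : Type*} (s : Finset ι) (f : ι → M ⊗[ℂ] N) (w : M ⊗[ℂ] N) :
    Bf w (∑ i ∈ s, f i) = ∑ i ∈ s, Bf w (f i) := by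
  classical
  induction s using Finset.induction_on with
  | empty => simpa using Bf_zero_right Bf Bf_add_right w
  | insert a s h ih => rw [Finset.sum_insert h, Finset.sum_insert h, Bf_add_right, ih]

theorem normsq_formula
    (Bf_add_left : ∀ z z' w, Bf (z + z') w = Bf z w + Bf z' w)
    (Bf_add_right : ∀ z w w', Bf z (w + w') = Bf z w + Bf z w')
    (Bf_tmul : ∀ (x x' : M) (y y' : N),
      Bf (x ⊗ₜ[ℂ] y) (x' ⊗ₜ[ℂ] y') = cM.inner x x' * cN.inner y y')
    {m : ℕ} (x x' : Fin m → M) (y : Fin m → N)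
    (hy : ∀ i j, cN.inner (y i) (y j) = if i = j then 1 else 0) :
    Bf (∑ j, x j ⊗ₜ[ℂ] y j) (∑ j, x' j ⊗ₜ[ℂ] y j) = ∑ j, cM.inner (x j) (x' j) := by
  rw [Bf_sum_left Bf Bf_add_left]
  have : ∀ j, Bf (x j ⊗ₜ[ℂ] y j) (∑ k, x' k ⊗ₜ[ℂ] y k) = cM.inner (x j) (x' j) := by
    intro j
    rw [Bf_sum_right Bf Bf_add_right]
    have : ∀ k, Bf (x j ⊗ₜ[ℂ] y j) (x' k ⊗ₜ[ℂ] y k)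
        = cM.inner (x j) (x' k) * (if j = k then 1 else 0) := by
      intro k; rw [Bf_tmul, hy]
    simp only [this, mul_ite, mul_one, mul_zero, Finset.sum_ite_eq, Finset.mem_univ, if_true]
  simp only [this]

theorem normsq_formula_left
    (Bf_add_left : ∀ z z' w, Bf (z + z') w = Bf z w + Bf z' w)
    (Bf_add_right : ∀ z w w', Bf z (w + w') = Bf z w + Bf z w')
    (Bf_tmul : ∀ (x x' : M) (y y' : N),
      Bf (x ⊗ₜ[ℂ] y) (x' ⊗ₜ[ℂ] y') = cM.inner x x' * cN.inner y y')
    {m : ℕ} (x : Fin m → M) (y y' : Fin m → N)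
    (hx : ∀ i j, cM.inner (x i) (x j) = if i = j then 1 else 0) :
    Bf (∑ j, x j ⊗ₜ[ℂ] y j) (∑ j, x j ⊗ₜ[ℂ] y' j) = ∑ j, cN.inner (y j) (y' j) := by
  rw [Bf_sum_left Bf Bf_add_left]
  have : ∀ j, Bf (x j ⊗ₜ[ℂ] y j) (∑ k, x k ⊗ₜ[ℂ] y' k) = cN.inner (y j) (y' j) := by
    intro j
    rw [Bf_sum_right Bf Bf_add_right]
    have : ∀ k, Bf (x j ⊗ₜ[ℂ] y j) (x k ⊗ₜ[ℂ] y' k)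
        = (if j = k then 1 else 0) * cN.inner (y j) (y' k) := by
      intro k; rw [Bf_tmul, hx]
    simp only [this, ite_mul, one_mul, zero_mul, Finset.sum_ite_eq, Finset.mem_univ, if_true]
  simp only [this]

end Aux2
section Aux5

variable {M N : Type*} [AddCommGroup M] [Module ℂ M] [AddCommGroup N] [Module ℂ N]
  (cM : InnerProductSpace.Core ℂ M) (cN : InnerProductSpace.Core ℂ N)
  (Bf : M ⊗[ℂ] N → M ⊗[ℂ] N → ℂ)
  (Bf_add_left : ∀ z z' w, Bf (z + z') w = Bf z w + Bf z' w)
  (Bf_add_right : ∀ z w w', Bf z (w + w') = Bf z w + Bf z w')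
  (Bf_tmul : ∀ (x x' : M) (y y' : N),
      Bf (x ⊗ₜ[ℂ] y) (x' ⊗ₜ[ℂ] y') = cM.inner x x' * cN.inner y y')

include Bf_add_left Bf_add_right Bf_tmul

theorem keyRep (z : M ⊗[ℂ] N) :
    ∃ (m : ℕ) (x : Fin m → M), Bf z z = ∑ j, cM.inner (x j) (x j)
      ∧ ((∀ j, x j = 0) → z = 0) := by
  obtain ⟨m, x, y, hy, hz⟩ := orthoRepCore_right cN z
  refine ⟨m, x, ?_, ?_⟩
  · rw [hz]; exact normsq_formula cM cN Bf Bf_add_left Bf_add_right Bf_tmul x x y hy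
  · intro h; rw [hz]; simp [h]

theorem sqrt_Bf_tmul (x : M) (y : N) :
    Real.sqrt (Bf (x ⊗ₜ[ℂ] y) (x ⊗ₜ[ℂ] y)).re
      = Real.sqrt (cM.inner x x).re * Real.sqrt (cN.inner y y).re := by
  have hx : 0 ≤ (cM.inner x x).re := cM.re_inner_nonneg x
  rw [Bf_tmul, Complex.mul_re, core_inner_self_im cM, core_inner_self_im cN,
    mul_zero, sub_zero, Real.sqrt_mul hx]

theorem map_bound_right (f : M →ₗ[ℂ] M) (C : ℝ) (hC : 0 ≤ C)
    (hf : ∀ u, Real.sqrt (cM.inner (f u) (f u)).re ≤ C * Real.sqrt (cM.inner u u).re)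
    (w : M ⊗[ℂ] N) :
    Real.sqrt (Bf (TensorProduct.map f LinearMap.id w) (TensorProduct.map f LinearMap.id w)).re
      ≤ C * Real.sqrt (Bf w w).re := by
  obtain ⟨m, x, y, hy, hw⟩ := orthoRepCore_right cN w
  have hmap : TensorProduct.map f LinearMap.id w = ∑ j, f (x j) ⊗ₜ[ℂ] y j := by
    rw [hw, map_sum]; simp
  rw [hmap, hw,
    normsq_formula cM cN Bf Bf_add_left Bf_add_right Bf_tmul _ _ y hy,
    normsq_formula cM cN Bf Bf_add_left Bf_add_right Bf_tmul x x y hy,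
    Complex.re_sum, Complex.re_sum]
  have h1 : ∀ j, (cM.inner (f (x j)) (f (x j))).re ≤ C ^ 2 * (cM.inner (x j) (x j)).re := by
    intro j
    have h0 : 0 ≤ (cM.inner (f (x j)) (f (x j))).re := cM.re_inner_nonneg _
    have h0' : 0 ≤ (cM.inner (x j) (x j)).re := cM.re_inner_nonneg _
    have h2 := mul_self_le_mul_self (Real.sqrt_nonneg ((cM.inner (f (x j)) (f (x j))).re)) (hf (x j))
    rw [Real.mul_self_sqrt h0] at h2
    nlinarith [Real.sq_sqrt h0', Real.sqrt_nonneg ((cM.inner (x j) (x j)).re)]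
  calc Real.sqrt (∑ j, (cM.inner (f (x j)) (f (x j))).re)
      ≤ Real.sqrt (C ^ 2 * ∑ j, (cM.inner (x j) (x j)).re) := by
        apply Real.sqrt_le_sqrt
        rw [Finset.mul_sum]
        exact Finset.sum_le_sum fun j _ => h1 j
    _ = C * Real.sqrt (∑ j, (cM.inner (x j) (x j)).re) := by
        rw [Real.sqrt_mul (sq_nonneg C), Real.sqrt_sq hC]

theorem map_bound_left (g : N →ₗ[ℂ] N) (C : ℝ) (hC : 0 ≤ C)
    (hg : ∀ u, Real.sqrt (cN.inner (g u) (g u)).re ≤ C * Real.sqrt (cN.inner u u).re)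
    (w : M ⊗[ℂ] N) :
    Real.sqrt (Bf (TensorProduct.map LinearMap.id g w) (TensorProduct.map LinearMap.id g w)).re
      ≤ C * Real.sqrt (Bf w w).re := by
  obtain ⟨m, x, y, hx, hw⟩ := orthoRepCore_left cM w
  have hmap : TensorProduct.map LinearMap.id g w = ∑ j, x j ⊗ₜ[ℂ] g (y j) := by
    rw [hw, map_sum]; simp
  rw [hmap, hw,
    normsq_formula_left cM cN Bf Bf_add_left Bf_add_right Bf_tmul x _ _ hx,
    normsq_formula_left cM cN Bf Bf_add_left Bf_add_right Bf_tmul x y y hx,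
    Complex.re_sum, Complex.re_sum]
  have h1 : ∀ j, (cN.inner (g (y j)) (g (y j))).re ≤ C ^ 2 * (cN.inner (y j) (y j)).re := by
    intro j
    have h0 : 0 ≤ (cN.inner (g (y j)) (g (y j))).re := cN.re_inner_nonneg _
    have h0' : 0 ≤ (cN.inner (y j) (y j)).re := cN.re_inner_nonneg _
    have h2 := mul_self_le_mul_self (Real.sqrt_nonneg ((cN.inner (g (y j)) (g (y j))).re)) (hg (y j))
    rw [Real.mul_self_sqrt h0] at h2
    nlinarith [Real.sq_sqrt h0', Real.sqrt_nonneg ((cN.inner (y j) (y j)).re)]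
  calc Real.sqrt (∑ j, (cN.inner (g (y j)) (g (y j))).re)
      ≤ Real.sqrt (C ^ 2 * ∑ j, (cN.inner (y j) (y j)).re) := by
        apply Real.sqrt_le_sqrt
        rw [Finset.mul_sum]
        exact Finset.sum_le_sum fun j _ => h1 j
    _ = C * Real.sqrt (∑ j, (cN.inner (y j) (y j)).re) := by
        rw [Real.sqrt_mul (sq_nonneg C), Real.sqrt_sq hC]

end Aux5


/-- Let `(A, ⟪·,·⟫₁)` and `(B, ⟪·,·⟫₂)` be unital Hilbert algebras over `ℂ`.
Endow the algebraic tensor product `A ⊗[ℂ] B` with the tensor product *-algebra structure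
(involution `st` determined by `(x ⊗ y)* = x* ⊗ y*` and additivity) and with the sesquilinear
form `Bf` determined by `Bf (x ⊗ y) (x' ⊗ y') = ⟪x, x'⟫₁ * ⟪y, y'⟫₂`.  Then `A ⊗[ℂ] B` is
again a unital Hilbert algebra: `Bf` is a Hermitian positive-definite inner product, and with
respect to the induced norm `‖z‖_B = √(Bf z z).re` one has (1) every left multiplication
`w ↦ z * w` is continuous (bounded), (2) `Bf (z*w) v = Bf w (z* * v)`, (3) `Bf z w = Bf w* z*`,
and (4) the linear span of products is `‖·‖_B`-dense in `A ⊗[ℂ] B`. -/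
theorem stmt_0
    {A B : Type*}
    [Ring A] [Algebra ℂ A] [StarRing A] [StarModule ℂ A]
    [Ring B] [Algebra ℂ B] [StarRing B] [StarModule ℂ B]
    -- the inner products of the two unital Hilbert algebras
    (cA : InnerProductSpace.Core ℂ A) (cB : InnerProductSpace.Core ℂ B)
    -- Hilbert algebra axiom (1): left multiplications are continuous (bounded)
    (hA1 : ∀ x : A, ∃ C : ℝ, 0 ≤ C ∧ ∀ y : A,
      Real.sqrt (cA.inner (x * y) (x * y)).re ≤ C * Real.sqrt (cA.inner y y).re)
    (hB1 : ∀ x : B, ∃ C : ℝ, 0 ≤ C ∧ ∀ y : B,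
      Real.sqrt (cB.inner (x * y) (x * y)).re ≤ C * Real.sqrt (cB.inner y y).re)
    -- Hilbert algebra axiom (2): ⟪xy, z⟫ = ⟪y, x*z⟫
    (hA2 : ∀ x y z : A, cA.inner (x * y) z = cA.inner y (star x * z))
    (hB2 : ∀ x y z : B, cB.inner (x * y) z = cB.inner y (star x * z))
    -- Hilbert algebra axiom (3): ⟪x, y⟫ = ⟪y*, x*⟫
    (hA3 : ∀ x y : A, cA.inner x y = cA.inner (star y) (star x))
    (hB3 : ∀ x y : B, cB.inner x y = cB.inner (star y) (star x))
    -- Hilbert algebra axiom (4): the span of products is dense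
    (hA4 : ∀ a : A, ∀ ε : ℝ, 0 < ε → ∃ b ∈ Submodule.span ℂ {p : A | ∃ x y : A, p = x * y},
      Real.sqrt (cA.inner (a - b) (a - b)).re < ε)
    (hB4 : ∀ a : B, ∀ ε : ℝ, 0 < ε → ∃ b ∈ Submodule.span ℂ {p : B | ∃ x y : B, p = x * y},
      Real.sqrt (cB.inner (a - b) (a - b)).re < ε)
    -- the involution of the tensor product *-algebra `A ⊗[ℂ] B`
    (st : A ⊗[ℂ] B → A ⊗[ℂ] B)
    (st_add : ∀ z w : A ⊗[ℂ] B, st (z + w) = st z + st w)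
    (st_tmul : ∀ (x : A) (y : B), st (x ⊗ₜ[ℂ] y) = star x ⊗ₜ[ℂ] star y)
    -- the sesquilinear form `Bf` on `A ⊗[ℂ] B` determined by the inner products of the factors
    (Bf : A ⊗[ℂ] B → A ⊗[ℂ] B → ℂ)
    (Bf_add_left : ∀ z z' w : A ⊗[ℂ] B, Bf (z + z') w = Bf z w + Bf z' w)
    (Bf_add_right : ∀ z w w' : A ⊗[ℂ] B, Bf z (w + w') = Bf z w + Bf z w')
    (Bf_smul_left : ∀ (c : ℂ) (z w : A ⊗[ℂ] B), Bf (c • z) w = conj c * Bf z w)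
    (Bf_smul_right : ∀ (c : ℂ) (z w : A ⊗[ℂ] B), Bf z (c • w) = c * Bf z w)
    (Bf_tmul : ∀ (x x' : A) (y y' : B),
      Bf (x ⊗ₜ[ℂ] y) (x' ⊗ₜ[ℂ] y') = cA.inner x x' * cB.inner y y') :
    -- `Bf` is a Hermitian, positive-definite inner product on `A ⊗[ℂ] B`:
    (∀ z w : A ⊗[ℂ] B, conj (Bf w z) = Bf z w) ∧
    (∀ z : A ⊗[ℂ] B, 0 ≤ (Bf z z).re) ∧
    (∀ z : A ⊗[ℂ] B, Bf z z = 0 → z = 0) ∧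
    -- (1) every left multiplication is bounded for the norm induced by `Bf`:
    (∀ z : A ⊗[ℂ] B, ∃ C : ℝ, 0 ≤ C ∧ ∀ w : A ⊗[ℂ] B,
      Real.sqrt (Bf (z * w) (z * w)).re ≤ C * Real.sqrt (Bf w w).re) ∧
    -- (2) `Bf (z*w) v = Bf w (z* * v)`:
    (∀ z w v : A ⊗[ℂ] B, Bf (z * w) v = Bf w (st z * v)) ∧
    -- (3) `Bf z w = Bf w* z*`:
    (∀ z w : A ⊗[ℂ] B, Bf z w = Bf (st w) (st z)) ∧
    -- (4) the linear span of products is dense for the norm induced by `Bf`: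
    (∀ ζ : A ⊗[ℂ] B, ∀ ε : ℝ, 0 < ε →
      ∃ w ∈ Submodule.span ℂ {p : A ⊗[ℂ] B | ∃ z z' : A ⊗[ℂ] B, p = z * z'},
        Real.sqrt (Bf (ζ - w) (ζ - w)).re < ε) := by
  classical
  have st0 : st 0 = 0 := by
    have h := st_add 0 0
    rw [add_zero] at h
    exact add_eq_left.mp h.symm
  have BfL0 : ∀ w, Bf 0 w = 0 := Bf_zero_left Bf Bf_add_left
  have BfR0 : ∀ w, Bf w 0 = 0 := Bf_zero_right Bf Bf_add_right
  -- Hermitian symmetry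
  have herm : ∀ z w : A ⊗[ℂ] B, conj (Bf w z) = Bf z w := by
    intro z w
    induction z using TensorProduct.induction_on with
    | zero => rw [BfR0, BfL0, map_zero]
    | tmul a b =>
      induction w using TensorProduct.induction_on with
      | zero => rw [BfL0, BfR0, map_zero]
      | tmul c d =>
        rw [Bf_tmul, Bf_tmul, map_mul, cA.conj_inner_symm, cB.conj_inner_symm]
      | add w w' hw hw' => rw [Bf_add_right, Bf_add_left, map_add, hw, hw']
    | add z z' hz hz' => rw [Bf_add_left, Bf_add_right, map_add, hz, hz']
  -- positivity and definiteness
  have key := fun z => keyRep cA cB Bf Bf_add_left Bf_add_right Bf_tmul z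
  have nonneg' : ∀ z : A ⊗[ℂ] B, 0 ≤ (Bf z z).re := by
    intro z
    obtain ⟨m, x, hBf, -⟩ := key z
    rw [hBf, Complex.re_sum]
    exact Finset.sum_nonneg fun j _ => cA.re_inner_nonneg (x j)
  have definite' : ∀ z : A ⊗[ℂ] B, Bf z z = 0 → z = 0 := by
    intro z h
    obtain ⟨m, x, hBf, hx0⟩ := key z
    apply hx0
    intro j
    have hre : ∑ j, (cA.inner (x j) (x j)).re = 0 := by
      rw [← Complex.re_sum, ← hBf, h, Complex.zero_re]
    have hj : (cA.inner (x j) (x j)).re = 0 :=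
      (Finset.sum_eq_zero_iff_of_nonneg (fun j _ => cA.re_inner_nonneg (x j))).mp hre j
        (Finset.mem_univ j)
    apply cA.definite
    apply Complex.ext
    · simpa using hj
    · rw [core_inner_self_im cA]; simp
  -- the inner product space core on the tensor product
  let cT : InnerProductSpace.Core ℂ (A ⊗[ℂ] B) :=
    { inner := Bf
      conj_inner_symm := fun x y => herm x y
      re_inner_nonneg := fun z => nonneg' z
      add_left := Bf_add_left
      smul_left := fun x y r => Bf_smul_left r x y
      definite := definite' }
  -- multiplication by a pure tensor as a tensor product of linear maps
  have mul_eq : ∀ (a : A) (b : B) (w : A ⊗[ℂ] B),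
      (a ⊗ₜ[ℂ] b) * w
        = TensorProduct.map (LinearMap.mulLeft ℂ a) (LinearMap.mulLeft ℂ b) w := by
    intro a b w
    induction w using TensorProduct.induction_on with
    | zero => rw [mul_zero, map_zero]
    | tmul c d => rw [Algebra.TensorProduct.tmul_mul_tmul, TensorProduct.map_tmul]; rfl
    | add u v hu hv => rw [mul_add, map_add, hu, hv]
  -- part (1) : boundedness of left multiplication
  choose Ca hCa using hA1
  choose Cb hCb using hB1
  have map_bound : ∀ (a : A) (b : B) (w : A ⊗[ℂ] B),
      Real.sqrt (Bf ((a ⊗ₜ[ℂ] b) * w) ((a ⊗ₜ[ℂ] b) * w)).re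
        ≤ Ca a * Cb b * Real.sqrt (Bf w w).re := by
    intro a b w
    rw [mul_eq]
    have hsplit : TensorProduct.map (LinearMap.mulLeft ℂ a) (LinearMap.mulLeft ℂ b) w
        = TensorProduct.map (LinearMap.mulLeft ℂ a) LinearMap.id
            (TensorProduct.map LinearMap.id (LinearMap.mulLeft ℂ b) w) := by
      rw [← LinearMap.comp_apply, ← TensorProduct.map_comp, LinearMap.comp_id,
        LinearMap.id_comp]
    rw [hsplit]
    calc Real.sqrt (Bf (TensorProduct.map (LinearMap.mulLeft ℂ a) LinearMap.id
            (TensorProduct.map LinearMap.id (LinearMap.mulLeft ℂ b) w))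
          (TensorProduct.map (LinearMap.mulLeft ℂ a) LinearMap.id
            (TensorProduct.map LinearMap.id (LinearMap.mulLeft ℂ b) w))).re
        ≤ Ca a * Real.sqrt (Bf (TensorProduct.map LinearMap.id (LinearMap.mulLeft ℂ b) w)
            (TensorProduct.map LinearMap.id (LinearMap.mulLeft ℂ b) w)).re :=
          map_bound_right cA cB Bf Bf_add_left Bf_add_right Bf_tmul
            (LinearMap.mulLeft ℂ a) (Ca a) (hCa a).1 (fun u => (hCa a).2 u) _
      _ ≤ Ca a * (Cb b * Real.sqrt (Bf w w).re) := by
          refine mul_le_mul_of_nonneg_left ?_ (hCa a).1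
          exact map_bound_left cA cB Bf Bf_add_left Bf_add_right Bf_tmul
            (LinearMap.mulLeft ℂ b) (Cb b) (hCb b).1 (fun u => (hCb b).2 u) w
      _ = Ca a * Cb b * Real.sqrt (Bf w w).re := by ring
  have part1 : ∀ z : A ⊗[ℂ] B, ∃ C : ℝ, 0 ≤ C ∧ ∀ w : A ⊗[ℂ] B,
      Real.sqrt (Bf (z * w) (z * w)).re ≤ C * Real.sqrt (Bf w w).re := by
    intro z
    obtain ⟨S, rfl⟩ := TensorProduct.exists_finset z
    refine ⟨∑ p ∈ S, Ca p.1 * Cb p.2,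
      Finset.sum_nonneg fun p _ => mul_nonneg (hCa p.1).1 (hCb p.2).1, ?_⟩
    intro w
    have hzw : (∑ p ∈ S, p.1 ⊗ₜ[ℂ] p.2) * w = ∑ p ∈ S, (p.1 ⊗ₜ[ℂ] p.2) * w := by
      rw [Finset.sum_mul]
    calc Real.sqrt (Bf ((∑ p ∈ S, p.1 ⊗ₜ[ℂ] p.2) * w) ((∑ p ∈ S, p.1 ⊗ₜ[ℂ] p.2) * w)).re
        = Real.sqrt (Bf (∑ p ∈ S, (p.1 ⊗ₜ[ℂ] p.2) * w)
            (∑ p ∈ S, (p.1 ⊗ₜ[ℂ] p.2) * w)).re := by rw [hzw]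
      _ ≤ ∑ p ∈ S, Real.sqrt (Bf ((p.1 ⊗ₜ[ℂ] p.2) * w) ((p.1 ⊗ₜ[ℂ] p.2) * w)).re :=
          core_sqrt_sum_le cT S _
      _ ≤ ∑ p ∈ S, Ca p.1 * Cb p.2 * Real.sqrt (Bf w w).re :=
          Finset.sum_le_sum fun p _ => map_bound p.1 p.2 w
      _ = (∑ p ∈ S, Ca p.1 * Cb p.2) * Real.sqrt (Bf w w).re := by
          rw [Finset.sum_mul]
  -- part (2)
  have part2 : ∀ z w v : A ⊗[ℂ] B, Bf (z * w) v = Bf w (st z * v) := by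
    intro z
    induction z using TensorProduct.induction_on with
    | zero => intro w v; rw [zero_mul, st0, zero_mul, BfL0, BfR0]
    | tmul a b =>
      intro w
      induction w using TensorProduct.induction_on with
      | zero => intro v; rw [mul_zero, BfL0, BfL0]
      | tmul c d =>
        intro v
        induction v using TensorProduct.induction_on with
        | zero => rw [BfR0, mul_zero, BfR0]
        | tmul e f =>
          rw [Algebra.TensorProduct.tmul_mul_tmul, st_tmul,
            Algebra.TensorProduct.tmul_mul_tmul, Bf_tmul, Bf_tmul, hA2, hB2]
        | add v v' hv hv' => rw [Bf_add_right, hv, hv', mul_add, Bf_add_right]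
      | add w w' hw hw' => intro v; rw [mul_add, Bf_add_left, hw v, hw' v, Bf_add_left]
    | add z z' hz hz' =>
      intro w v
      rw [add_mul, Bf_add_left, hz w v, hz' w v, st_add, add_mul, Bf_add_right]
  -- part (3)
  have part3 : ∀ z w : A ⊗[ℂ] B, Bf z w = Bf (st w) (st z) := by
    intro z
    induction z using TensorProduct.induction_on with
    | zero => intro w; rw [BfL0, st0, BfR0]
    | tmul a b =>
      intro w
      induction w using TensorProduct.induction_on with
      | zero => rw [BfR0, st0, BfL0]
      | tmul c d => rw [st_tmul, st_tmul, Bf_tmul, Bf_tmul, hA3 a c, hB3 b d]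
      | add w w' hw hw' => rw [Bf_add_right, hw, hw', st_add, Bf_add_left]
    | add z z' hz hz' => intro w; rw [Bf_add_left, hz w, hz' w, st_add, Bf_add_right]
  -- part (4) : density of the span of products
  have tensor_mem : ∀ a ∈ Submodule.span ℂ {p : A | ∃ x y : A, p = x * y},
      ∀ b ∈ Submodule.span ℂ {p : B | ∃ x y : B, p = x * y},
      a ⊗ₜ[ℂ] b ∈ Submodule.span ℂ {p : A ⊗[ℂ] B | ∃ z z' : A ⊗[ℂ] B, p = z * z'} := by
    intro a ha
    induction ha using Submodule.span_induction with
    | mem x hx =>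
      obtain ⟨u, v, rfl⟩ := hx
      intro b hb
      induction hb using Submodule.span_induction with
      | mem y hy =>
        obtain ⟨s, t, rfl⟩ := hy
        apply Submodule.subset_span
        exact ⟨u ⊗ₜ[ℂ] s, v ⊗ₜ[ℂ] t, by rw [Algebra.TensorProduct.tmul_mul_tmul]⟩
      | zero => rw [TensorProduct.tmul_zero]; exact Submodule.zero_mem _
      | add y y' _ _ ihy ihy' => rw [TensorProduct.tmul_add]; exact Submodule.add_mem _ ihy ihy'
      | smul r y _ ihy => rw [TensorProduct.tmul_smul]; exact Submodule.smul_mem _ _ ihy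
    | zero => intro b hb; rw [TensorProduct.zero_tmul]; exact Submodule.zero_mem _
    | add x x' _ _ ihx ihx' =>
      intro b hb
      rw [TensorProduct.add_tmul]
      exact Submodule.add_mem _ (ihx b hb) (ihx' b hb)
    | smul r x _ ihx =>
      intro b hb
      rw [← TensorProduct.smul_tmul']
      exact Submodule.smul_mem _ _ (ihx b hb)
  have part4 : ∀ ζ : A ⊗[ℂ] B, ∀ ε : ℝ, 0 < ε →
      ∃ w ∈ Submodule.span ℂ {p : A ⊗[ℂ] B | ∃ z z' : A ⊗[ℂ] B, p = z * z'},
        Real.sqrt (Bf (ζ - w) (ζ - w)).re < ε := by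
    intro ζ ε hε
    obtain ⟨S, rfl⟩ := TensorProduct.exists_finset ζ
    set n := S.card with hn
    set ε' := ε / (n + 1) with hε'
    have hε'pos : 0 < ε' := div_pos hε (Nat.cast_add_one_pos n)
    have hterm : ∀ p : A × B,
        ∃ w ∈ Submodule.span ℂ {p : A ⊗[ℂ] B | ∃ z z' : A ⊗[ℂ] B, p = z * z'},
          Real.sqrt (Bf (p.1 ⊗ₜ[ℂ] p.2 - w) (p.1 ⊗ₜ[ℂ] p.2 - w)).re < ε' := by
      intro p
      set Na := Real.sqrt (cA.inner p.1 p.1).re with hNa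
      set Nb := Real.sqrt (cB.inner p.2 p.2).re with hNb
      have hNa0 : 0 ≤ Na := Real.sqrt_nonneg _
      have hNb0 : 0 ≤ Nb := Real.sqrt_nonneg _
      set δ := min 1 (ε' / (Na + Nb + 2)) with hδ
      have hδpos : 0 < δ := lt_min one_pos (div_pos hε'pos (by linarith))
      have hδ1 : δ ≤ 1 := min_le_left _ _
      obtain ⟨a', ha'mem, ha'⟩ := hA4 p.1 δ hδpos
      obtain ⟨b', hb'mem, hb'⟩ := hB4 p.2 δ hδpos
      refine ⟨a' ⊗ₜ[ℂ] b', tensor_mem a' ha'mem b' hb'mem, ?_⟩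
      have hsplit : p.1 ⊗ₜ[ℂ] p.2 - a' ⊗ₜ[ℂ] b'
          = (p.1 - a') ⊗ₜ[ℂ] p.2 + a' ⊗ₜ[ℂ] (p.2 - b') := by
        rw [TensorProduct.sub_tmul, TensorProduct.tmul_sub]; abel
      rw [hsplit]
      have ha'norm : Real.sqrt (cA.inner a' a').re ≤ Na + 1 := by
        have h := core_sqrt_sub_le cA p.1 a'
        rw [← hNa] at h
        linarith [ha'.le, hδ1]
      calc Real.sqrt (Bf ((p.1 - a') ⊗ₜ[ℂ] p.2 + a' ⊗ₜ[ℂ] (p.2 - b'))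
              ((p.1 - a') ⊗ₜ[ℂ] p.2 + a' ⊗ₜ[ℂ] (p.2 - b'))).re
          ≤ Real.sqrt (Bf ((p.1 - a') ⊗ₜ[ℂ] p.2) ((p.1 - a') ⊗ₜ[ℂ] p.2)).re
            + Real.sqrt (Bf (a' ⊗ₜ[ℂ] (p.2 - b')) (a' ⊗ₜ[ℂ] (p.2 - b'))).re :=
            core_sqrt_add_le cT _ _
        _ = Real.sqrt (cA.inner (p.1 - a') (p.1 - a')).re * Nb
            + Real.sqrt (cA.inner a' a').re * Real.sqrt (cB.inner (p.2 - b') (p.2 - b')).re := by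
            rw [sqrt_Bf_tmul cA cB Bf Bf_add_left Bf_add_right Bf_tmul,
              sqrt_Bf_tmul cA cB Bf Bf_add_left Bf_add_right Bf_tmul, hNb]
        _ ≤ δ * Nb + (Na + 1) * δ := by
            have h1 := ha'.le
            have h2 := hb'.le
            have h3 : 0 ≤ Real.sqrt (cA.inner (p.1 - a') (p.1 - a')).re := Real.sqrt_nonneg _
            have h4 : 0 ≤ Real.sqrt (cB.inner (p.2 - b') (p.2 - b')).re := Real.sqrt_nonneg _
            have h5 : 0 ≤ Real.sqrt (cA.inner a' a').re := Real.sqrt_nonneg _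
            gcongr
        _ = δ * (Na + Nb + 1) := by ring
        _ ≤ (ε' / (Na + Nb + 2)) * (Na + Nb + 1) := by
            refine mul_le_mul_of_nonneg_right (min_le_right _ _) (by linarith)
        _ < ε' := by
            rw [div_mul_eq_mul_div, div_lt_iff₀ (by linarith)]
            nlinarith
    choose wf hwmem hwlt using hterm
    refine ⟨∑ p ∈ S, wf p, Submodule.sum_mem _ fun p _ => hwmem p, ?_⟩
    have hdiff : (∑ p ∈ S, p.1 ⊗ₜ[ℂ] p.2) - ∑ p ∈ S, wf p
        = ∑ p ∈ S, (p.1 ⊗ₜ[ℂ] p.2 - wf p) := by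
      rw [Finset.sum_sub_distrib]
    calc Real.sqrt (Bf ((∑ p ∈ S, p.1 ⊗ₜ[ℂ] p.2) - ∑ p ∈ S, wf p)
            ((∑ p ∈ S, p.1 ⊗ₜ[ℂ] p.2) - ∑ p ∈ S, wf p)).re
        = Real.sqrt (Bf (∑ p ∈ S, (p.1 ⊗ₜ[ℂ] p.2 - wf p))
            (∑ p ∈ S, (p.1 ⊗ₜ[ℂ] p.2 - wf p))).re := by rw [hdiff]
      _ ≤ ∑ p ∈ S, Real.sqrt (Bf (p.1 ⊗ₜ[ℂ] p.2 - wf p) (p.1 ⊗ₜ[ℂ] p.2 - wf p)).re :=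
          core_sqrt_sum_le cT S _
      _ ≤ ∑ _p ∈ S, ε' := Finset.sum_le_sum fun p _ => (hwlt p).le
      _ = n * ε' := by rw [Finset.sum_const, nsmul_eq_mul, hn]
      _ < ε := by
          rw [hε']
          rw [mul_div_assoc'] -- n * ε / (n+1)
          rw [div_lt_iff₀ (Nat.cast_add_one_pos n)]
          nlinarith [hε]
  exact ⟨herm, nonneg', definite', part1, part2, part3, part4⟩
end

section
/- Let (A₀, ⟪·,·⟫₁) and (B₀, ⟪·,·⟫₂) be Hilbert algebras over ℂ, and let B be the sesquilinear form on the tensor product *-algebra A₀ ⊗[ℂ] B₀ determined by B(x ⊗ y, x' ⊗ y') = ⟪x, x'⟫₁⟪y, y'⟫₂ (an inner product), with induced norm ‖·‖_B. Then for every z ∈ A₀ ⊗[ℂ] B₀ there exists a constant C ≥ 0 such that ‖zw‖_B ≤ C ‖w‖_B for all w ∈ A₀ ⊗[ℂ] B₀; that is, every left multiplication operator on A₀ ⊗[ℂ] B₀ is bounded for ‖·‖_B. -/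
open scoped TensorProduct ComplexConjugate

private lemma exists_list_tmul {A B : Type*} [AddCommGroup A] [Module ℂ A]
    [AddCommGroup B] [Module ℂ B] (w : A ⊗[ℂ] B) :
    ∃ l : List (A × B), (l.map fun p => p.1 ⊗ₜ[ℂ] p.2).sum = w := by
  induction w using TensorProduct.induction_on with
  | zero => exact ⟨[], rfl⟩
  | tmul x y => exact ⟨[(x, y)], by simp⟩
  | add w1 w2 h1 h2 =>
    obtain ⟨l1, e1⟩ := h1
    obtain ⟨l2, e2⟩ := h2
    exact ⟨l1 ++ l2, by simp [e1, e2]⟩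

set_option maxHeartbeats 2000000 in
/-- For Hilbert algebras `A` and `B` over `ℂ` and the inner product `Bf` on the
tensor product *-algebra `A ⊗[ℂ] B` determined by
`Bf (x ⊗ y) (x' ⊗ y') = ⟪x, x'⟫₁ * ⟪y, y'⟫₂`, with induced norm `‖z‖_B = √(Bf z z).re`,
every left multiplication operator `w ↦ z * w` on `A ⊗[ℂ] B` is bounded for `‖·‖_B`. -/
theorem stmt_3
    {A B : Type*}
    [NonUnitalRing A] [Module ℂ A] [SMulCommClass ℂ A A] [IsScalarTower ℂ A A]
    [StarRing A] [StarModule ℂ A]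
    [NonUnitalRing B] [Module ℂ B] [SMulCommClass ℂ B B] [IsScalarTower ℂ B B]
    [StarRing B] [StarModule ℂ B]
    -- the inner products of the two Hilbert algebras
    (cA : InnerProductSpace.Core ℂ A) (cB : InnerProductSpace.Core ℂ B)
    -- Hilbert algebra axiom (1): left multiplications are continuous (bounded)
    (hA1 : ∀ x : A, ∃ C : ℝ, 0 ≤ C ∧ ∀ y : A,
      Real.sqrt (cA.inner (x * y) (x * y)).re ≤ C * Real.sqrt (cA.inner y y).re)
    (hB1 : ∀ x : B, ∃ C : ℝ, 0 ≤ C ∧ ∀ y : B,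
      Real.sqrt (cB.inner (x * y) (x * y)).re ≤ C * Real.sqrt (cB.inner y y).re)
    -- Hilbert algebra axiom (2): ⟪xy, z⟫ = ⟪y, x*z⟫
    (hA2 : ∀ x y z : A, cA.inner (x * y) z = cA.inner y (star x * z))
    (hB2 : ∀ x y z : B, cB.inner (x * y) z = cB.inner y (star x * z))
    -- Hilbert algebra axiom (3): ⟪x, y⟫ = ⟪y*, x*⟫
    (hA3 : ∀ x y : A, cA.inner x y = cA.inner (star y) (star x))
    (hB3 : ∀ x y : B, cB.inner x y = cB.inner (star y) (star x))
    -- Hilbert algebra axiom (4): the span of products is dense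
    (hA4 : ∀ a : A, ∀ ε : ℝ, 0 < ε → ∃ b ∈ Submodule.span ℂ {p : A | ∃ x y : A, p = x * y},
      Real.sqrt (cA.inner (a - b) (a - b)).re < ε)
    (hB4 : ∀ a : B, ∀ ε : ℝ, 0 < ε → ∃ b ∈ Submodule.span ℂ {p : B | ∃ x y : B, p = x * y},
      Real.sqrt (cB.inner (a - b) (a - b)).re < ε)
    -- the involution of the tensor product *-algebra `A ⊗[ℂ] B`
    (st : A ⊗[ℂ] B → A ⊗[ℂ] B)
    (st_add : ∀ z w : A ⊗[ℂ] B, st (z + w) = st z + st w)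
    (st_tmul : ∀ (x : A) (y : B), st (x ⊗ₜ[ℂ] y) = star x ⊗ₜ[ℂ] star y)
    -- the sesquilinear form `Bf` on `A ⊗[ℂ] B` determined by the inner products of the factors
    (Bf : A ⊗[ℂ] B → A ⊗[ℂ] B → ℂ)
    (Bf_add_left : ∀ z z' w : A ⊗[ℂ] B, Bf (z + z') w = Bf z w + Bf z' w)
    (Bf_add_right : ∀ z w w' : A ⊗[ℂ] B, Bf z (w + w') = Bf z w + Bf z w')
    (Bf_smul_left : ∀ (c : ℂ) (z w : A ⊗[ℂ] B), Bf (c • z) w = conj c * Bf z w)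
    (Bf_smul_right : ∀ (c : ℂ) (z w : A ⊗[ℂ] B), Bf z (c • w) = c * Bf z w)
    (Bf_tmul : ∀ (x x' : A) (y y' : B),
      Bf (x ⊗ₜ[ℂ] y) (x' ⊗ₜ[ℂ] y') = cA.inner x x' * cB.inner y y')
    -- `Bf` is an inner product
    (Bf_conj_symm : ∀ z w : A ⊗[ℂ] B, conj (Bf w z) = Bf z w)
    (Bf_nonneg : ∀ z : A ⊗[ℂ] B, 0 ≤ (Bf z z).re)
    (Bf_definite : ∀ z : A ⊗[ℂ] B, Bf z z = 0 → z = 0) :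
    ∀ z : A ⊗[ℂ] B, ∃ C : ℝ, 0 ≤ C ∧ ∀ w : A ⊗[ℂ] B,
      Real.sqrt (Bf (z * w) (z * w)).re ≤ C * Real.sqrt (Bf w w).re := by
  classical
  letI := cA.toNormedAddCommGroup
  letI := InnerProductSpace.ofCore cA.toCore
  letI := cB.toNormedAddCommGroup
  letI := InnerProductSpace.ofCore cB.toCore
  letI cT : InnerProductSpace.Core ℂ (A ⊗[ℂ] B) :=
    { inner := Bf
      conj_inner_symm := Bf_conj_symm
      re_inner_nonneg := Bf_nonneg
      add_left := Bf_add_left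
      smul_left := fun x y r => Bf_smul_left r x y
      definite := Bf_definite }
  letI := cT.toNormedAddCommGroup
  letI := InnerProductSpace.ofCore cT.toCore
  -- choice of constants for left multiplications on the factors
  choose CA hCA0 hCA using hA1
  choose CB hCB0 hCB using hB1
  have hCA' : ∀ x y : A, ‖x * y‖ ≤ CA x * ‖y‖ := hCA
  have hCB' : ∀ x y : B, ‖x * y‖ ≤ CB x * ‖y‖ := hCB
  -- basic facts about Bf
  have Bf0l : ∀ w : A ⊗[ℂ] B, Bf 0 w = 0 := fun w => inner_zero_left (𝕜 := ℂ) w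
  have Bf0r : ∀ w : A ⊗[ℂ] B, Bf w 0 = 0 := fun w => inner_zero_right (𝕜 := ℂ) w
  have st0 : st 0 = 0 := by
    have h := st_add 0 0
    rw [add_zero] at h
    exact left_eq_add.mp h
  -- norm of a simple tensor
  have hn : ∀ (a : A) (b : B), ‖a ⊗ₜ[ℂ] b‖ = ‖a‖ * ‖b‖ := by
    intro a b
    have h1 : Bf (a ⊗ₜ[ℂ] b) (a ⊗ₜ[ℂ] b) = ((‖a‖ ^ 2 * ‖b‖ ^ 2 : ℝ) : ℂ) := by
      rw [Bf_tmul]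
      have e1 : cA.inner a a = ((‖a‖ : ℂ)) ^ 2 := inner_self_eq_norm_sq_to_K (𝕜 := ℂ) a
      have e2 : cB.inner b b = ((‖b‖ : ℂ)) ^ 2 := inner_self_eq_norm_sq_to_K (𝕜 := ℂ) b
      rw [e1, e2]
      push_cast
      ring
    have h2 : ‖a ⊗ₜ[ℂ] b‖ = Real.sqrt (Bf (a ⊗ₜ[ℂ] b) (a ⊗ₜ[ℂ] b)).re := rfl
    rw [h2, h1, Complex.ofReal_re]
    rw [show ‖a‖ ^ 2 * ‖b‖ ^ 2 = (‖a‖ * ‖b‖) ^ 2 by ring,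
      Real.sqrt_sq (by positivity)]
  -- the adjoint relation
  have hadj : ∀ (z w w' : A ⊗[ℂ] B), Bf (z * w) w' = Bf w (st z * w') := by
    intro z
    induction z using TensorProduct.induction_on with
    | zero =>
      intro w w'
      rw [zero_mul, st0, zero_mul, Bf0l, Bf0r]
    | tmul x y =>
      intro w w'
      rw [st_tmul]
      induction w using TensorProduct.induction_on with
      | zero => rw [mul_zero, Bf0l, Bf0l]
      | tmul a b =>
        induction w' using TensorProduct.induction_on with
        | zero => rw [mul_zero, Bf0r, Bf0r]
        | tmul a' b' =>
          rw [Algebra.TensorProduct.tmul_mul_tmul, Algebra.TensorProduct.tmul_mul_tmul,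
            Bf_tmul, Bf_tmul, hA2, hB2]
        | add w1 w2 h1 h2 => rw [mul_add, Bf_add_right, Bf_add_right, h1, h2]
      | add w1 w2 h1 h2 => rw [mul_add, Bf_add_left, Bf_add_left, h1, h2]
    | add z1 z2 h1 h2 =>
      intro w w'
      rw [add_mul, st_add, add_mul, Bf_add_left, Bf_add_right, h1, h2]
  -- st is an antihomomorphism and an involution
  have hstm : ∀ p q : A ⊗[ℂ] B, st (p * q) = st q * st p := by
    intro p q
    induction p using TensorProduct.induction_on with
    | zero => rw [zero_mul, st0, mul_zero]
    | tmul x y =>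
      induction q using TensorProduct.induction_on with
      | zero => rw [mul_zero, st0, zero_mul]
      | tmul x' y' =>
        rw [Algebra.TensorProduct.tmul_mul_tmul, st_tmul, st_tmul, st_tmul,
          Algebra.TensorProduct.tmul_mul_tmul, star_mul, star_mul]
      | add q1 q2 h1 h2 => rw [mul_add, st_add, st_add, h1, h2, add_mul]
    | add p1 p2 h1 h2 => rw [add_mul, st_add, st_add, h1, h2, mul_add]
  have hstst : ∀ p : A ⊗[ℂ] B, st (st p) = p := by
    intro p
    induction p using TensorProduct.induction_on with
    | zero => rw [st0, st0]
    | tmul x y => rw [st_tmul, st_tmul, star_star, star_star]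
    | add p1 p2 h1 h2 => rw [st_add, st_add, h1, h2]
  -- list estimates
  have hVnonneg : ∀ l : List (A × B), 0 ≤ (l.map fun p => ‖p.1‖ * ‖p.2‖).sum := by
    intro l
    apply List.sum_nonneg
    intro x hx
    simp only [List.mem_map] at hx
    obtain ⟨p, -, rfl⟩ := hx
    exact mul_nonneg (norm_nonneg _) (norm_nonneg _)
  have hns : ∀ l : List (A × B),
      ‖(l.map fun p => p.1 ⊗ₜ[ℂ] p.2).sum‖ ≤ (l.map fun p => ‖p.1‖ * ‖p.2‖).sum := by
    intro l
    induction l with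
    | nil => simp
    | cons p l ih =>
      simp only [List.map_cons, List.sum_cons]
      refine (norm_add_le _ _).trans ?_
      exact add_le_add (le_of_eq (hn p.1 p.2)) ih
  have hsm : ∀ (p : A × B) (l : List (A × B)),
      ((l.map fun q => (p.1 * q.1, p.2 * q.2)).map fun r => r.1 ⊗ₜ[ℂ] r.2).sum
        = (p.1 ⊗ₜ[ℂ] p.2) * (l.map fun q => q.1 ⊗ₜ[ℂ] q.2).sum := by
    intro p l
    induction l with
    | nil => simp
    | cons q l ih =>
      simp only [List.map_cons, List.sum_cons, mul_add, ih,
        Algebra.TensorProduct.tmul_mul_tmul]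
  have hsv : ∀ (p : A × B) (l : List (A × B)),
      ((l.map fun q => (p.1 * q.1, p.2 * q.2)).map fun r => ‖r.1‖ * ‖r.2‖).sum
        ≤ (CA p.1 * CB p.2) * (l.map fun q => ‖q.1‖ * ‖q.2‖).sum := by
    intro p l
    induction l with
    | nil => simp
    | cons q l ih =>
      simp only [List.map_cons, List.sum_cons, mul_add]
      refine add_le_add ?_ ih
      calc ‖p.1 * q.1‖ * ‖p.2 * q.2‖
          ≤ (CA p.1 * ‖q.1‖) * (CB p.2 * ‖q.2‖) :=
            mul_le_mul (hCA' p.1 q.1) (hCB' p.2 q.2) (norm_nonneg _)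
              (mul_nonneg (hCA0 _) (norm_nonneg _))
        _ = CA p.1 * CB p.2 * (‖q.1‖ * ‖q.2‖) := by ring
  have hkey : ∀ lu l : List (A × B), ∃ l' : List (A × B),
      (l'.map fun p => p.1 ⊗ₜ[ℂ] p.2).sum
        = ((lu.map fun p => p.1 ⊗ₜ[ℂ] p.2).sum) * ((l.map fun p => p.1 ⊗ₜ[ℂ] p.2).sum)
      ∧ (l'.map fun p => ‖p.1‖ * ‖p.2‖).sum
        ≤ ((lu.map fun p => CA p.1 * CB p.2).sum) * (l.map fun p => ‖p.1‖ * ‖p.2‖).sum := by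
    intro lu l
    induction lu with
    | nil => exact ⟨[], by simp, by simp⟩
    | cons p lu ih =>
      obtain ⟨l', e', v'⟩ := ih
      refine ⟨(l.map fun q => (p.1 * q.1, p.2 * q.2)) ++ l', ?_, ?_⟩
      · rw [List.map_append, List.sum_append, e', List.map_cons, List.sum_cons, add_mul, hsm]
      · rw [List.map_append, List.sum_append, List.map_cons, List.sum_cons, add_mul]
        exact add_le_add (hsv p l) v'
  -- Cauchy-Schwarz and norm-square identities
  have hcs : ∀ a b : A ⊗[ℂ] B, (Bf a b).re ≤ ‖a‖ * ‖b‖ := by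
    intro a b
    calc (Bf a b).re ≤ |(Bf a b).re| := le_abs_self _
      _ ≤ ‖Bf a b‖ := Complex.abs_re_le_norm _
      _ = ‖(@inner ℂ _ InnerProductSpace.toInner a b : ℂ)‖ := rfl
      _ ≤ ‖a‖ * ‖b‖ := norm_inner_le_norm a b
  have hnsq : ∀ a : A ⊗[ℂ] B, (Bf a a).re = ‖a‖ ^ 2 := fun a =>
    inner_self_eq_norm_sq (𝕜 := ℂ) a
  -- main argument
  intro z
  obtain ⟨lu, hlu⟩ := exists_list_tmul (st z * z)
  set M : ℝ := (lu.map fun p => CA p.1 * CB p.2).sum with hM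
  have hM0 : 0 ≤ M := by
    apply List.sum_nonneg
    intro x hx
    simp only [List.mem_map] at hx
    obtain ⟨p, -, rfl⟩ := hx
    exact mul_nonneg (hCA0 _) (hCB0 _)
  refine ⟨Real.sqrt M, Real.sqrt_nonneg M, ?_⟩
  intro w
  show ‖z * w‖ ≤ Real.sqrt M * ‖w‖
  have hust : st (st z * z) = st z * z := by rw [hstm, hstst]
  let v : ℕ → A ⊗[ℂ] B := fun n => Nat.rec w (fun _ ih => (st z * z) * ih) n
  have hv0 : v 0 = w := rfl
  have hvs : ∀ n, v (n + 1) = (st z * z) * v n := fun n => rfl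
  have ha : ∀ k, ‖v (k + 1)‖ ^ 2 ≤ ‖v k‖ * ‖v (k + 2)‖ := by
    intro k
    have e1 : Bf (v (k + 1)) (v (k + 1)) = Bf (v k) (v (k + 2)) := by
      show Bf ((st z * z) * v k) ((st z * z) * v k)
        = Bf (v k) ((st z * z) * ((st z * z) * v k))
      rw [hadj, hust]
    calc ‖v (k + 1)‖ ^ 2 = (Bf (v (k + 1)) (v (k + 1))).re := (hnsq _).symm
      _ = (Bf (v k) (v (k + 2))).re := by rw [e1]
      _ ≤ ‖v k‖ * ‖v (k + 2)‖ := hcs _ _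
  have hb : ∀ n, ‖v 1‖ * ‖v (n + 1)‖ ≤ ‖v 0‖ * ‖v (n + 2)‖ := by
    intro n
    induction n with
    | zero =>
      have h := ha 0
      simp only [zero_add] at h ⊢
      nlinarith [h]
    | succ n ih =>
      rcases eq_or_lt_of_le (norm_nonneg (v (n + 2))) with h0 | h0
      · rw [← h0, mul_zero]
        exact mul_nonneg (norm_nonneg _) (norm_nonneg _)
      · have h1 := ha (n + 1)
        have h2 := mul_le_mul_of_nonneg_right ih (norm_nonneg (v (n + 3)))
        have h3 := mul_le_mul_of_nonneg_left h1 (norm_nonneg (v 1))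
        have h4 : ‖v 1‖ * ‖v (n + 2)‖ * ‖v (n + 2)‖
            ≤ ‖v 0‖ * ‖v (n + 3)‖ * ‖v (n + 2)‖ := by nlinarith
        exact le_of_mul_le_mul_right h4 h0
  have hc : ∀ n, ‖v 1‖ ^ (n + 1) ≤ ‖v 0‖ ^ n * ‖v (n + 1)‖ := by
    intro n
    induction n with
    | zero => simp
    | succ n ih =>
      calc ‖v 1‖ ^ (n + 2) = ‖v 1‖ ^ (n + 1) * ‖v 1‖ := by ring
        _ ≤ (‖v 0‖ ^ n * ‖v (n + 1)‖) * ‖v 1‖ :=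
          mul_le_mul_of_nonneg_right ih (norm_nonneg _)
        _ = ‖v 0‖ ^ n * (‖v 1‖ * ‖v (n + 1)‖) := by ring
        _ ≤ ‖v 0‖ ^ n * (‖v 0‖ * ‖v (n + 2)‖) :=
          mul_le_mul_of_nonneg_left (hb n) (by positivity)
        _ = ‖v 0‖ ^ (n + 1) * ‖v (n + 2)‖ := by ring
  obtain ⟨lw, hlw⟩ := exists_list_tmul w
  set K : ℝ := (lw.map fun p => ‖p.1‖ * ‖p.2‖).sum with hK
  have hK0 : 0 ≤ K := hVnonneg lw
  have hdd : ∀ n, ∃ l : List (A × B),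
      (l.map fun p => p.1 ⊗ₜ[ℂ] p.2).sum = v n
        ∧ (l.map fun p => ‖p.1‖ * ‖p.2‖).sum ≤ M ^ n * K := by
    intro n
    induction n with
    | zero => exact ⟨lw, hlw, by rw [pow_zero, one_mul]⟩
    | succ n ih =>
      obtain ⟨l, hl1, hl2⟩ := ih
      obtain ⟨l', e', v'⟩ := hkey lu l
      refine ⟨l', ?_, ?_⟩
      · rw [e', hlu, hl1]
      · calc (l'.map fun p => ‖p.1‖ * ‖p.2‖).sum
            ≤ M * (l.map fun p => ‖p.1‖ * ‖p.2‖).sum := v'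
          _ ≤ M * (M ^ n * K) := mul_le_mul_of_nonneg_left hl2 hM0
          _ = M ^ (n + 1) * K := by ring
  have hd : ∀ n, ‖v n‖ ≤ M ^ n * K := by
    intro n
    obtain ⟨l, hl1, hl2⟩ := hdd n
    calc ‖v n‖ = ‖(l.map fun p => p.1 ⊗ₜ[ℂ] p.2).sum‖ := by rw [hl1]
      _ ≤ (l.map fun p => ‖p.1‖ * ‖p.2‖).sum := hns l
      _ ≤ M ^ n * K := hl2
  have hfin : ‖v 1‖ ≤ M * ‖v 0‖ := by
    rcases eq_or_lt_of_le (norm_nonneg (v 0)) with h0 | h0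
    · have hw : w = 0 := norm_eq_zero.mp h0.symm
      have hv1 : v 1 = 0 := by
        show st z * z * w = 0
        rw [hw, mul_zero]
      rw [hv1, norm_zero]
      exact mul_nonneg hM0 (norm_nonneg _)
    · by_contra hlt
      push_neg at hlt
      have hb0 : 0 ≤ M * ‖v 0‖ := mul_nonneg hM0 (norm_nonneg _)
      have hbounds : ∀ n : ℕ, ‖v 1‖ ^ (n + 1) ≤ (M * ‖v 0‖) ^ (n + 1) * (K / ‖v 0‖) := by
        intro n
        have h3 : ‖v 1‖ ^ (n + 1) ≤ ‖v 0‖ ^ n * (M ^ (n + 1) * K) :=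
          le_trans (hc n) (mul_le_mul_of_nonneg_left (hd (n + 1)) (by positivity))
        have hne : ‖v 0‖ ≠ 0 := ne_of_gt h0
        have hcl : ‖v 0‖ ^ (n + 1) * ‖v 0‖⁻¹ = ‖v 0‖ ^ n := by
          rw [pow_succ, mul_assoc, mul_inv_cancel₀ hne, mul_one]
        calc ‖v 1‖ ^ (n + 1) ≤ ‖v 0‖ ^ n * (M ^ (n + 1) * K) := h3
          _ = (M * ‖v 0‖) ^ (n + 1) * (K / ‖v 0‖) := by
            rw [mul_pow, div_eq_mul_inv,
              show M ^ (n + 1) * ‖v 0‖ ^ (n + 1) * (K * ‖v 0‖⁻¹)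
                = M ^ (n + 1) * K * (‖v 0‖ ^ (n + 1) * ‖v 0‖⁻¹) from by ring, hcl]
            ring
      rcases eq_or_lt_of_le hb0 with hb0' | hb0'
      · have h4 := hbounds 0
        simp only [zero_add, pow_one] at h4
        rw [← hb0', zero_mul] at h4
        linarith
      · set t : ℝ := ‖v 1‖ / (M * ‖v 0‖) with hT
        have ht : 1 < t := (one_lt_div hb0').mpr hlt
        set c : ℝ := K / ‖v 0‖ with hc'
        have hc0 : 0 ≤ c := div_nonneg hK0 (norm_nonneg _)
        have hq : ∀ n : ℕ, t ^ (n + 1) ≤ c := by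
          intro n
          rw [hT, div_pow, div_le_iff₀ (pow_pos hb0' (n + 1))]
          calc ‖v 1‖ ^ (n + 1) ≤ (M * ‖v 0‖) ^ (n + 1) * c := hbounds n
            _ = c * (M * ‖v 0‖) ^ (n + 1) := by ring
        obtain ⟨n, hn⟩ := Archimedean.arch c (sub_pos.mpr ht)
        rw [nsmul_eq_mul] at hn
        have hber := one_add_mul_le_pow (by linarith : (-2 : ℝ) ≤ t - 1) (n + 1)
        rw [show (1 : ℝ) + (t - 1) = t by ring] at hber
        have hqn := hq n
        push_cast at hber
        nlinarith
  have hzw : ‖z * w‖ ^ 2 ≤ M * ‖w‖ ^ 2 := by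
    have e1 : Bf (z * w) (z * w) = Bf (v 0) (v 1) := by
      show Bf (z * w) (z * w) = Bf w (st z * z * w)
      rw [hadj, mul_assoc]
    calc ‖z * w‖ ^ 2 = (Bf (z * w) (z * w)).re := (hnsq _).symm
      _ = (Bf (v 0) (v 1)).re := by rw [e1]
      _ ≤ ‖v 0‖ * ‖v 1‖ := hcs _ _
      _ ≤ ‖v 0‖ * (M * ‖v 0‖) := mul_le_mul_of_nonneg_left hfin (norm_nonneg _)
      _ = M * ‖w‖ ^ 2 := by rw [hv0]; ring
  have h1 : Real.sqrt (‖z * w‖ ^ 2) ≤ Real.sqrt (M * ‖w‖ ^ 2) := Real.sqrt_le_sqrt hzw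
  rwa [Real.sqrt_sq (norm_nonneg _), Real.sqrt_mul hM0, Real.sqrt_sq (norm_nonneg _)] at h1
end

section
/- Let (A₀, ⟪·,·⟫₁) and (B₀, ⟪·,·⟫₂) be Hilbert algebras over ℂ (not necessarily unital), and let B be the sesquilinear form on the tensor product *-algebra A₀ ⊗[ℂ] B₀ determined by B(x ⊗ y, x' ⊗ y') = ⟪x, x'⟫₁⟪y, y'⟫₂ (an inner product), with induced norm ‖·‖_B. Then the linear span of the set of products {zw : z, w ∈ A₀ ⊗[ℂ] B₀} is dense in A₀ ⊗[ℂ] B₀ with respect to ‖·‖_B. -/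
open scoped TensorProduct ComplexConjugate

/-- For (not necessarily unital) Hilbert algebras `A` and `B` over `ℂ` and the
inner product `Bf` on the tensor product *-algebra `A ⊗[ℂ] B` determined by
`Bf (x ⊗ y) (x' ⊗ y') = ⟪x, x'⟫₁ * ⟪y, y'⟫₂`, with induced norm `‖z‖_B = √(Bf z z).re`,
the linear span of the set of products `{z * w : z, w ∈ A ⊗[ℂ] B}` is `‖·‖_B`-dense in
`A ⊗[ℂ] B`. -/
theorem stmt_4
    {A B : Type*}
    [NonUnitalRing A] [Module ℂ A] [SMulCommClass ℂ A A] [IsScalarTower ℂ A A]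
    [StarRing A] [StarModule ℂ A]
    [NonUnitalRing B] [Module ℂ B] [SMulCommClass ℂ B B] [IsScalarTower ℂ B B]
    [StarRing B] [StarModule ℂ B]
    -- the inner products of the two Hilbert algebras
    (cA : InnerProductSpace.Core ℂ A) (cB : InnerProductSpace.Core ℂ B)
    -- Hilbert algebra axiom (1): left multiplications are continuous (bounded)
    (hA1 : ∀ x : A, ∃ C : ℝ, 0 ≤ C ∧ ∀ y : A,
      Real.sqrt (cA.inner (x * y) (x * y)).re ≤ C * Real.sqrt (cA.inner y y).re)
    (hB1 : ∀ x : B, ∃ C : ℝ, 0 ≤ C ∧ ∀ y : B,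
      Real.sqrt (cB.inner (x * y) (x * y)).re ≤ C * Real.sqrt (cB.inner y y).re)
    -- Hilbert algebra axiom (2): ⟪xy, z⟫ = ⟪y, x*z⟫
    (hA2 : ∀ x y z : A, cA.inner (x * y) z = cA.inner y (star x * z))
    (hB2 : ∀ x y z : B, cB.inner (x * y) z = cB.inner y (star x * z))
    -- Hilbert algebra axiom (3): ⟪x, y⟫ = ⟪y*, x*⟫
    (hA3 : ∀ x y : A, cA.inner x y = cA.inner (star y) (star x))
    (hB3 : ∀ x y : B, cB.inner x y = cB.inner (star y) (star x))
    -- Hilbert algebra axiom (4): the span of products is dense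
    (hA4 : ∀ a : A, ∀ ε : ℝ, 0 < ε → ∃ b ∈ Submodule.span ℂ {p : A | ∃ x y : A, p = x * y},
      Real.sqrt (cA.inner (a - b) (a - b)).re < ε)
    (hB4 : ∀ a : B, ∀ ε : ℝ, 0 < ε → ∃ b ∈ Submodule.span ℂ {p : B | ∃ x y : B, p = x * y},
      Real.sqrt (cB.inner (a - b) (a - b)).re < ε)
    -- the involution of the tensor product *-algebra `A ⊗[ℂ] B`
    (st : A ⊗[ℂ] B → A ⊗[ℂ] B)
    (st_add : ∀ z w : A ⊗[ℂ] B, st (z + w) = st z + st w)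
    (st_tmul : ∀ (x : A) (y : B), st (x ⊗ₜ[ℂ] y) = star x ⊗ₜ[ℂ] star y)
    -- the sesquilinear form `Bf` on `A ⊗[ℂ] B` determined by the inner products of the factors
    (Bf : A ⊗[ℂ] B → A ⊗[ℂ] B → ℂ)
    (Bf_add_left : ∀ z z' w : A ⊗[ℂ] B, Bf (z + z') w = Bf z w + Bf z' w)
    (Bf_add_right : ∀ z w w' : A ⊗[ℂ] B, Bf z (w + w') = Bf z w + Bf z w')
    (Bf_smul_left : ∀ (c : ℂ) (z w : A ⊗[ℂ] B), Bf (c • z) w = conj c * Bf z w)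
    (Bf_smul_right : ∀ (c : ℂ) (z w : A ⊗[ℂ] B), Bf z (c • w) = c * Bf z w)
    (Bf_tmul : ∀ (x x' : A) (y y' : B),
      Bf (x ⊗ₜ[ℂ] y) (x' ⊗ₜ[ℂ] y') = cA.inner x x' * cB.inner y y')
    -- `Bf` is an inner product
    (Bf_conj_symm : ∀ z w : A ⊗[ℂ] B, conj (Bf w z) = Bf z w)
    (Bf_nonneg : ∀ z : A ⊗[ℂ] B, 0 ≤ (Bf z z).re)
    (Bf_definite : ∀ z : A ⊗[ℂ] B, Bf z z = 0 → z = 0) :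
    ∀ ζ : A ⊗[ℂ] B, ∀ ε : ℝ, 0 < ε →
      ∃ w ∈ Submodule.span ℂ {p : A ⊗[ℂ] B | ∃ z z' : A ⊗[ℂ] B, p = z * z'},
        Real.sqrt (Bf (ζ - w) (ζ - w)).re < ε := by
  letI nA : NormedAddCommGroup A := cA.toNormedAddCommGroup
  letI iA : InnerProductSpace ℂ A := InnerProductSpace.ofCore cA.toCore
  letI nB : NormedAddCommGroup B := cB.toNormedAddCommGroup
  letI iB : InnerProductSpace ℂ B := InnerProductSpace.ofCore cB.toCore
  letI cT : InnerProductSpace.Core ℂ (A ⊗[ℂ] B) :=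
    { inner := Bf
      conj_inner_symm := Bf_conj_symm
      re_inner_nonneg := Bf_nonneg
      add_left := Bf_add_left
      smul_left := fun x y r => Bf_smul_left r x y
      definite := Bf_definite }
  letI nT : NormedAddCommGroup (A ⊗[ℂ] B) := cT.toNormedAddCommGroup
  letI iT : InnerProductSpace ℂ (A ⊗[ℂ] B) := InnerProductSpace.ofCore cT.toCore
  -- norms are given by the square roots
  have hnA : ∀ u : A, Real.sqrt (cA.inner u u).re = ‖u‖ := fun u => rfl
  have hnB : ∀ u : B, Real.sqrt (cB.inner u u).re = ‖u‖ := fun u => rfl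
  have hnT : ∀ u : A ⊗[ℂ] B, Real.sqrt (Bf u u).re = ‖u‖ := fun u => rfl
  have innA : ∀ u v : A, cA.inner u v = inner ℂ u v := fun u v => rfl
  have innB : ∀ u v : B, cB.inner u v = inner ℂ u v := fun u v => rfl
  -- norm of a simple tensor
  have htm : ∀ (x : A) (y : B), ‖x ⊗ₜ[ℂ] y‖ = ‖x‖ * ‖y‖ := by
    intro x y
    rw [← hnT]
    rw [Bf_tmul, innA, innB, inner_self_eq_norm_sq_to_K, inner_self_eq_norm_sq_to_K]
    have h : ((‖x‖ : ℂ) ^ 2 * (‖y‖ : ℂ) ^ 2).re = (‖x‖ * ‖y‖) ^ 2 := by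
      norm_cast
      ring
    norm_num [h]
    rw [Real.sqrt_sq (by positivity)]
  set S := Submodule.span ℂ {p : A ⊗[ℂ] B | ∃ z z' : A ⊗[ℂ] B, p = z * z'} with hS
  set SA := Submodule.span ℂ {p : A | ∃ x y : A, p = x * y} with hSA
  set SB := Submodule.span ℂ {p : B | ∃ x y : B, p = x * y} with hSB
  -- membership lemma
  have hmem : ∀ a ∈ SA, ∀ b ∈ SB, a ⊗ₜ[ℂ] b ∈ S := by
    intro a ha
    refine Submodule.span_induction ?_ ?_ ?_ ?_ ha
    · rintro p ⟨x, y, rfl⟩ b hb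
      refine Submodule.span_induction ?_ ?_ ?_ ?_ hb
      · rintro q ⟨u, v, rfl⟩
        refine Submodule.subset_span ⟨x ⊗ₜ[ℂ] u, y ⊗ₜ[ℂ] v, ?_⟩
        rw [Algebra.TensorProduct.tmul_mul_tmul]
      · simp [TensorProduct.tmul_zero]
      · intro q r _ _ hq hr
        rw [TensorProduct.tmul_add]; exact S.add_mem hq hr
      · intro c q _ hq
        rw [TensorProduct.tmul_smul]; exact S.smul_mem c hq
    · intro b _; simp [TensorProduct.zero_tmul]
    · intro p q _ _ hp hq b hb
      rw [TensorProduct.add_tmul]; exact S.add_mem (hp b hb) (hq b hb)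
    · intro c p _ hp b hb
      rw [← TensorProduct.smul_tmul']; exact S.smul_mem c (hp b hb)
  -- rephrase density hypotheses
  have hA4' : ∀ a : A, ∀ ε : ℝ, 0 < ε → ∃ b ∈ SA, ‖a - b‖ < ε := by
    intro a ε hε; obtain ⟨b, hb, h⟩ := hA4 a ε hε
    exact ⟨b, hb, by rwa [hnA] at h⟩
  have hB4' : ∀ a : B, ∀ ε : ℝ, 0 < ε → ∃ b ∈ SB, ‖a - b‖ < ε := by
    intro a ε hε; obtain ⟨b, hb, h⟩ := hB4 a ε hε
    exact ⟨b, hb, by rwa [hnB] at h⟩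
  suffices H : ∀ ζ : A ⊗[ℂ] B, ∀ ε : ℝ, 0 < ε → ∃ w ∈ S, ‖ζ - w‖ < ε by
    intro ζ ε hε
    obtain ⟨w, hw, h⟩ := H ζ ε hε
    exact ⟨w, hw, by rwa [hnT]⟩
  intro ζ
  induction ζ using TensorProduct.induction_on with
  | zero =>
    intro ε hε
    exact ⟨0, S.zero_mem, by simpa using hε⟩
  | tmul x y =>
    intro ε hε
    have hy1 : (0:ℝ) < ‖y‖ + 1 := by positivity
    have hx2 : (0:ℝ) < ‖x‖ + 2 := by positivity
    set δ₁ : ℝ := min 1 (ε / (2 * (‖y‖ + 1))) with hδ₁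
    set δ₂ : ℝ := ε / (2 * (‖x‖ + 2)) with hδ₂
    have hδ₁pos : 0 < δ₁ := lt_min one_pos (by positivity)
    have hδ₂pos : 0 < δ₂ := by positivity
    obtain ⟨a, ha, hax⟩ := hA4' x δ₁ hδ₁pos
    obtain ⟨b, hb, hby⟩ := hB4' y δ₂ hδ₂pos
    refine ⟨a ⊗ₜ[ℂ] b, hmem a ha b hb, ?_⟩
    have key : x ⊗ₜ[ℂ] y - a ⊗ₜ[ℂ] b = (x - a) ⊗ₜ[ℂ] y + a ⊗ₜ[ℂ] (y - b) := by
      rw [TensorProduct.sub_tmul, TensorProduct.tmul_sub]; abel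
    rw [key]
    have hna : ‖a‖ ≤ ‖x‖ + 1 := by
      have := norm_sub_norm_le a x
      have h1 : δ₁ ≤ 1 := min_le_left _ _
      have : ‖a - x‖ < δ₁ := by rwa [norm_sub_rev] at hax
      nlinarith [norm_nonneg a, norm_nonneg x]
    calc ‖(x - a) ⊗ₜ[ℂ] y + a ⊗ₜ[ℂ] (y - b)‖
        ≤ ‖(x - a) ⊗ₜ[ℂ] y‖ + ‖a ⊗ₜ[ℂ] (y - b)‖ := norm_add_le _ _
      _ = ‖x - a‖ * ‖y‖ + ‖a‖ * ‖y - b‖ := by rw [htm, htm]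
      _ < ε := by
          have h1 : ‖x - a‖ * ‖y‖ ≤ δ₁ * ‖y‖ :=
            mul_le_mul_of_nonneg_right hax.le (norm_nonneg y)
          have h1' : δ₁ * ‖y‖ < ε / 2 := by
            have : δ₁ ≤ ε / (2 * (‖y‖ + 1)) := min_le_right _ _
            have h2 : δ₁ * ‖y‖ ≤ (ε / (2 * (‖y‖ + 1))) * ‖y‖ :=
              mul_le_mul_of_nonneg_right this (norm_nonneg y)
            have h3 : (ε / (2 * (‖y‖ + 1))) * ‖y‖ < ε / 2 := by
              rw [div_mul_eq_mul_div, div_lt_div_iff₀ (by positivity) (by norm_num)]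
              nlinarith [norm_nonneg y]
            linarith
          have h4 : ‖a‖ * ‖y - b‖ < (‖x‖ + 2) * δ₂ := by
            have hbb : 0 ≤ ‖y - b‖ := norm_nonneg _
            nlinarith [norm_nonneg a]
          have h5 : (‖x‖ + 2) * δ₂ = ε / 2 := by
            rw [hδ₂]; field_simp
          linarith
  | add z z' ihz ihz' =>
    intro ε hε
    obtain ⟨w, hw, h1⟩ := ihz (ε / 2) (by positivity)
    obtain ⟨w', hw', h2⟩ := ihz' (ε / 2) (by positivity)
    refine ⟨w + w', S.add_mem hw hw', ?_⟩
    have : z + z' - (w + w') = (z - w) + (z' - w') := by abel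
    rw [this]
    calc ‖(z - w) + (z' - w')‖ ≤ ‖z - w‖ + ‖z' - w'‖ := norm_add_le _ _
      _ < ε / 2 + ε / 2 := add_lt_add h1 h2
      _ = ε := by ring
end

section
/- Let H₁, H₂, K₁, K₂ be complex Hilbert spaces with H₁ ≠ {0} and H₂ ≠ {0}, and let S : H₁ → K₁ and T : H₂ → K₂ be bounded linear operators. Let H₁ ⊗̂ H₂ and K₁ ⊗̂ K₂ denote the Hilbert space completions of the algebraic tensor products with respect to the norms induced by the tensor-product inner products. Then there exists a unique bounded linear operator S ⊗̂ T : H₁ ⊗̂ H₂ → K₁ ⊗̂ K₂ such that (S ⊗̂ T)(ξ ⊗ η) = Sξ ⊗ Tη for all ξ ∈ H₁, η ∈ H₂, and its operator norm satisfies ‖S ⊗̂ T‖ = ‖S‖ · ‖T‖. -/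
open Finset
open scoped ComplexConjugate TensorProduct

section Helpers

variable {ι : Type*} {E F : Type*}
  [NormedAddCommGroup E] [InnerProductSpace ℂ E]
  [NormedAddCommGroup F] [InnerProductSpace ℂ F]

private lemma norm_sq_eq_re_inner' (x : E) : ‖x‖ ^ 2 = (inner ℂ x x : ℂ).re := by
  have := @inner_self_eq_norm_sq ℂ _ _ _ _ x
  simpa using this.symm

private lemma inner_self_ofReal' (x : E) : (inner ℂ x x : ℂ) = ((‖x‖ ^ 2 : ℝ) : ℂ) := by
  simpa using @inner_self_eq_norm_sq_to_K ℂ _ _ _ _ x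

private lemma sum_inner_sum' (s : Finset ι) (v w : ι → E) :
    (inner ℂ (∑ i ∈ s, v i) (∑ j ∈ s, w j) : ℂ)
      = ∑ i ∈ s, ∑ j ∈ s, (inner ℂ (v i) (w j) : ℂ) := by
  rw [sum_inner]
  exact Finset.sum_congr rfl fun i _ => inner_sum ..

private lemma norm_sq_sum' (s : Finset ι) (v : ι → E) :
    ‖∑ i ∈ s, v i‖ ^ 2 = (∑ i ∈ s, ∑ j ∈ s, (inner ℂ (v i) (v j) : ℂ)).re := by
  rw [← sum_inner_sum']
  exact norm_sq_eq_re_inner' _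

/-- positivity of the operator kernel `‖S‖²⟪ξ,ξ'⟫ - ⟪Sξ,Sξ'⟫`. -/
private lemma kernel_nonneg (S : E →L[ℂ] F) (s : Finset ι) (ξ : ι → E) (c : ι → ℂ) :
    0 ≤ (∑ i ∈ s, ∑ j ∈ s, conj (c i) * c j *
        ((‖S‖ : ℂ) ^ 2 * inner ℂ (ξ i) (ξ j) - inner ℂ (S (ξ i)) (S (ξ j)))).re := by
  set w := ∑ i ∈ s, c i • ξ i with hw
  have hSw : S w = ∑ i ∈ s, c i • S (ξ i) := by
    rw [hw, map_sum]; exact Finset.sum_congr rfl fun i _ => by rw [map_smul]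
  have e1 : (inner ℂ w w : ℂ) = ∑ i ∈ s, ∑ j ∈ s, conj (c i) * c j * inner ℂ (ξ i) (ξ j) := by
    rw [hw, sum_inner_sum']
    exact Finset.sum_congr rfl fun i _ => Finset.sum_congr rfl fun j _ => by
      rw [inner_smul_left, inner_smul_right]; ring
  have e2 : (inner ℂ (S w) (S w) : ℂ)
      = ∑ i ∈ s, ∑ j ∈ s, conj (c i) * c j * inner ℂ (S (ξ i)) (S (ξ j)) := by
    rw [hSw, sum_inner_sum']
    exact Finset.sum_congr rfl fun i _ => Finset.sum_congr rfl fun j _ => by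
      rw [inner_smul_left, inner_smul_right]; ring
  have key : (∑ i ∈ s, ∑ j ∈ s, conj (c i) * c j *
        ((‖S‖ : ℂ) ^ 2 * inner ℂ (ξ i) (ξ j) - inner ℂ (S (ξ i)) (S (ξ j))))
      = (‖S‖ : ℂ) ^ 2 * inner ℂ w w - inner ℂ (S w) (S w) := by
    rw [e1, e2, Finset.mul_sum, ← Finset.sum_sub_distrib]
    refine Finset.sum_congr rfl fun i _ => ?_
    rw [Finset.mul_sum, ← Finset.sum_sub_distrib]
    exact Finset.sum_congr rfl fun j _ => by ring
  rw [key, Complex.sub_re]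
  have hw2 : (((‖S‖ : ℂ)) ^ 2 * (inner ℂ w w : ℂ)).re = ‖S‖ ^ 2 * ‖w‖ ^ 2 := by
    rw [← Complex.ofReal_pow, Complex.re_ofReal_mul, ← norm_sq_eq_re_inner']
  rw [hw2, ← norm_sq_eq_re_inner']
  have h1 : ‖S w‖ ≤ ‖S‖ * ‖w‖ := S.le_opNorm w
  nlinarith [norm_nonneg (S w), norm_nonneg w, S.opNorm_nonneg]

/-- pairing a positive semidefinite kernel against a Gram matrix is nonnegative. -/
private lemma psd_gram (s : Finset ι) (A : ι → ι → ℂ)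
    (hA : ∀ c : ι → ℂ, 0 ≤ (∑ i ∈ s, ∑ j ∈ s, conj (c i) * c j * A i j).re)
    (y : ι → F) :
    0 ≤ (∑ i ∈ s, ∑ j ∈ s, A i j * (inner ℂ (y i) (y j) : ℂ)).re := by
  classical
  set Y : Submodule ℂ F := Submodule.span ℂ (y '' s) with hY
  have : FiniteDimensional ℂ Y :=
    FiniteDimensional.span_of_finite ℂ (((s : Set ι)).toFinite.image y)
  set b := stdOrthonormalBasis ℂ Y with hb
  set yy : ι → Y := fun i =>
    if h : i ∈ s then ⟨y i, Submodule.subset_span ⟨i, h, rfl⟩⟩ else 0 with hyy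
  have hyc : ∀ i ∈ s, ((yy i : Y) : F) = y i := fun i hi => by simp [hyy, hi]
  have key : ∀ i ∈ s, ∀ j ∈ s, (inner ℂ (y i) (y j) : ℂ)
      = ∑ k, conj (inner ℂ (b k) (yy i) : ℂ) * (inner ℂ (b k) (yy j) : ℂ) := by
    intro i hi j hj
    rw [← hyc i hi, ← hyc j hj, ← Submodule.coe_inner,
      ← b.sum_inner_mul_inner (yy i) (yy j)]
    exact Finset.sum_congr rfl fun k _ => by rw [← inner_conj_symm (yy i) (b k)]
  have e : (∑ i ∈ s, ∑ j ∈ s, A i j * (inner ℂ (y i) (y j) : ℂ))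
      = ∑ k, ∑ i ∈ s, ∑ j ∈ s,
          conj (inner ℂ (b k) (yy i) : ℂ) * (inner ℂ (b k) (yy j) : ℂ) * A i j := by
    have step1 : (∑ i ∈ s, ∑ j ∈ s, A i j * (inner ℂ (y i) (y j) : ℂ))
        = ∑ i ∈ s, ∑ k, ∑ j ∈ s,
            conj (inner ℂ (b k) (yy i) : ℂ) * (inner ℂ (b k) (yy j) : ℂ) * A i j := by
      refine Finset.sum_congr rfl fun i hi => ?_
      rw [Finset.sum_comm]
      refine Finset.sum_congr rfl fun j hj => ?_
      rw [key i hi j hj, Finset.mul_sum]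
      exact Finset.sum_congr rfl fun k _ => by ring
    rw [step1, Finset.sum_comm]
  rw [e, Complex.re_sum]
  exact Finset.sum_nonneg fun k _ => hA fun i => (inner ℂ (b k) (yy i) : ℂ)

end Helpers

/-- Let `H₁, H₂, K₁, K₂` be complex Hilbert spaces with `H₁ ≠ {0}` and
`H₂ ≠ {0}`, and let `S : H₁ →L[ℂ] K₁`, `T : H₂ →L[ℂ] K₂` be bounded linear operators.  Let
`HH = H₁ ⊗̂ H₂` and `KK = K₁ ⊗̂ K₂` be the Hilbert space completions of the algebraic tensor
products with respect to the tensor-product inner ℂ products; they are presented abstractly as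
Hilbert spaces together with bilinear tensor maps `ι₁`, `ι₂` that multiply inner ℂ products and
have dense span.  Then there exists a unique bounded linear operator `U : HH →L[ℂ] KK` with
`U (ξ ⊗ η) = Sξ ⊗ Tη` for all `ξ, η`, and moreover `‖U‖ = ‖S‖ * ‖T‖`. -/
theorem stmt_10
    {H₁ H₂ K₁ K₂ HH KK : Type*}
    [NormedAddCommGroup H₁] [InnerProductSpace ℂ H₁] [CompleteSpace H₁] [Nontrivial H₁]
    [NormedAddCommGroup H₂] [InnerProductSpace ℂ H₂] [CompleteSpace H₂] [Nontrivial H₂]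
    [NormedAddCommGroup K₁] [InnerProductSpace ℂ K₁] [CompleteSpace K₁]
    [NormedAddCommGroup K₂] [InnerProductSpace ℂ K₂] [CompleteSpace K₂]
    [NormedAddCommGroup HH] [InnerProductSpace ℂ HH] [CompleteSpace HH]
    [NormedAddCommGroup KK] [InnerProductSpace ℂ KK] [CompleteSpace KK]
    -- `HH` is the Hilbert tensor product `H₁ ⊗̂ H₂`, with tensor map `ι₁`
    (ι₁ : H₁ →ₗ[ℂ] H₂ →ₗ[ℂ] HH)
    (hι₁inner : ∀ (ξ ξ' : H₁) (η η' : H₂),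
      (inner ℂ (ι₁ ξ η) (ι₁ ξ' η') : ℂ) = (inner ℂ ξ ξ' : ℂ) * (inner ℂ η η' : ℂ))
    (hι₁dense : Dense (↑(Submodule.span ℂ {z : HH | ∃ ξ η, z = ι₁ ξ η}) : Set HH))
    -- `KK` is the Hilbert tensor product `K₁ ⊗̂ K₂`, with tensor map `ι₂`
    (ι₂ : K₁ →ₗ[ℂ] K₂ →ₗ[ℂ] KK)
    (hι₂inner : ∀ (ξ ξ' : K₁) (η η' : K₂),
      (inner ℂ (ι₂ ξ η) (ι₂ ξ' η') : ℂ) = (inner ℂ ξ ξ' : ℂ) * (inner ℂ η η' : ℂ))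
    (hι₂dense : Dense (↑(Submodule.span ℂ {z : KK | ∃ ξ η, z = ι₂ ξ η}) : Set KK))
    -- the bounded operators `S` and `T`
    (S : H₁ →L[ℂ] K₁) (T : H₂ →L[ℂ] K₂) :
    ∃ U : HH →L[ℂ] KK,
      (∀ (ξ : H₁) (η : H₂), U (ι₁ ξ η) = ι₂ (S ξ) (T η)) ∧
      ‖U‖ = ‖S‖ * ‖T‖ ∧
      ∀ V : HH →L[ℂ] KK, (∀ (ξ : H₁) (η : H₂), V (ι₁ ξ η) = ι₂ (S ξ) (T η)) → V = U := by
  classical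
  set C := ‖S‖ * ‖T‖ with hC
  have hC0 : 0 ≤ C := mul_nonneg (norm_nonneg _) (norm_nonneg _)
  -- the algebraic maps from the algebraic tensor product
  set j : H₁ ⊗[ℂ] H₂ →ₗ[ℂ] HH := TensorProduct.lift ι₁ with hjdef
  set k : H₁ ⊗[ℂ] H₂ →ₗ[ℂ] KK :=
    TensorProduct.lift ((ι₂.comp S.toLinearMap).compl₂ T.toLinearMap) with hkdef
  have hj : ∀ (ξ : H₁) (η : H₂), j (ξ ⊗ₜ[ℂ] η) = ι₁ ξ η := fun _ _ => rfl
  have hk : ∀ (ξ : H₁) (η : H₂), k (ξ ⊗ₜ[ℂ] η) = ι₂ (S ξ) (T η) := fun _ _ => rfl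
  -- the key norm inequality
  have key : ∀ t : H₁ ⊗[ℂ] H₂, ‖k t‖ ≤ C * ‖j t‖ := by
    intro t
    obtain ⟨sp, rfl⟩ := TensorProduct.exists_finset t
    have hjt : ‖j (∑ p ∈ sp, p.1 ⊗ₜ[ℂ] p.2)‖ ^ 2
        = (∑ p ∈ sp, ∑ q ∈ sp, (inner ℂ p.1 q.1 : ℂ) * (inner ℂ p.2 q.2 : ℂ)).re := by
      rw [map_sum, norm_sq_sum']
      congr 1
      exact Finset.sum_congr rfl fun p _ => Finset.sum_congr rfl fun q _ => by
        rw [hj, hj, hι₁inner]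
    have hkt : ‖k (∑ p ∈ sp, p.1 ⊗ₜ[ℂ] p.2)‖ ^ 2
        = (∑ p ∈ sp, ∑ q ∈ sp,
            (inner ℂ (S p.1) (S q.1) : ℂ) * (inner ℂ (T p.2) (T q.2) : ℂ)).re := by
      rw [map_sum, norm_sq_sum']
      congr 1
      exact Finset.sum_congr rfl fun p _ => Finset.sum_congr rfl fun q _ => by
        rw [hk, hk, hι₂inner]
    -- step 1 : remove S
    have step1 : (∑ p ∈ sp, ∑ q ∈ sp,
          (inner ℂ (S p.1) (S q.1) : ℂ) * (inner ℂ (T p.2) (T q.2) : ℂ)).re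
        ≤ ‖S‖ ^ 2 * (∑ p ∈ sp, ∑ q ∈ sp,
          (inner ℂ p.1 q.1 : ℂ) * (inner ℂ (T p.2) (T q.2) : ℂ)).re := by
      have h := psd_gram sp
        (fun p q => (‖S‖ : ℂ) ^ 2 * (inner ℂ p.1 q.1 : ℂ) - (inner ℂ (S p.1) (S q.1) : ℂ))
        (fun c => kernel_nonneg S sp (fun p => p.1) c) (fun p => T p.2)
      have expand : (∑ p ∈ sp, ∑ q ∈ sp,
            ((‖S‖ : ℂ) ^ 2 * (inner ℂ p.1 q.1 : ℂ) - (inner ℂ (S p.1) (S q.1) : ℂ))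
              * (inner ℂ (T p.2) (T q.2) : ℂ))
          = (‖S‖ : ℂ) ^ 2 * (∑ p ∈ sp, ∑ q ∈ sp,
              (inner ℂ p.1 q.1 : ℂ) * (inner ℂ (T p.2) (T q.2) : ℂ))
            - (∑ p ∈ sp, ∑ q ∈ sp,
              (inner ℂ (S p.1) (S q.1) : ℂ) * (inner ℂ (T p.2) (T q.2) : ℂ)) := by
        rw [Finset.mul_sum, ← Finset.sum_sub_distrib]
        refine Finset.sum_congr rfl fun p _ => ?_
        rw [Finset.mul_sum, ← Finset.sum_sub_distrib]
        exact Finset.sum_congr rfl fun q _ => by ring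
      rw [expand] at h
      rw [Complex.sub_re] at h
      have hre : ((‖S‖ : ℂ) ^ 2 * (∑ p ∈ sp, ∑ q ∈ sp,
            (inner ℂ p.1 q.1 : ℂ) * (inner ℂ (T p.2) (T q.2) : ℂ))).re
          = ‖S‖ ^ 2 * (∑ p ∈ sp, ∑ q ∈ sp,
            (inner ℂ p.1 q.1 : ℂ) * (inner ℂ (T p.2) (T q.2) : ℂ)).re := by
        rw [← Complex.ofReal_pow, Complex.re_ofReal_mul]
      rw [hre] at h
      linarith
    -- step 2 : remove T
    have step2 : (∑ p ∈ sp, ∑ q ∈ sp,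
          (inner ℂ p.1 q.1 : ℂ) * (inner ℂ (T p.2) (T q.2) : ℂ)).re
        ≤ ‖T‖ ^ 2 * (∑ p ∈ sp, ∑ q ∈ sp,
          (inner ℂ p.1 q.1 : ℂ) * (inner ℂ p.2 q.2 : ℂ)).re := by
      have h := psd_gram sp
        (fun p q => (‖T‖ : ℂ) ^ 2 * (inner ℂ p.2 q.2 : ℂ) - (inner ℂ (T p.2) (T q.2) : ℂ))
        (fun c => kernel_nonneg T sp (fun p => p.2) c) (fun p => p.1)
      have expand : (∑ p ∈ sp, ∑ q ∈ sp,
            ((‖T‖ : ℂ) ^ 2 * (inner ℂ p.2 q.2 : ℂ) - (inner ℂ (T p.2) (T q.2) : ℂ))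
              * (inner ℂ p.1 q.1 : ℂ))
          = (‖T‖ : ℂ) ^ 2 * (∑ p ∈ sp, ∑ q ∈ sp,
              (inner ℂ p.1 q.1 : ℂ) * (inner ℂ p.2 q.2 : ℂ))
            - (∑ p ∈ sp, ∑ q ∈ sp,
              (inner ℂ p.1 q.1 : ℂ) * (inner ℂ (T p.2) (T q.2) : ℂ)) := by
        rw [Finset.mul_sum, ← Finset.sum_sub_distrib]
        refine Finset.sum_congr rfl fun p _ => ?_
        rw [Finset.mul_sum, ← Finset.sum_sub_distrib]
        exact Finset.sum_congr rfl fun q _ => by ring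
      rw [expand] at h
      rw [Complex.sub_re] at h
      have hre : ((‖T‖ : ℂ) ^ 2 * (∑ p ∈ sp, ∑ q ∈ sp,
            (inner ℂ p.1 q.1 : ℂ) * (inner ℂ p.2 q.2 : ℂ))).re
          = ‖T‖ ^ 2 * (∑ p ∈ sp, ∑ q ∈ sp,
            (inner ℂ p.1 q.1 : ℂ) * (inner ℂ p.2 q.2 : ℂ)).re := by
        rw [← Complex.ofReal_pow, Complex.re_ofReal_mul]
      rw [hre] at h
      linarith
    -- combine
    have hsq : ‖k (∑ p ∈ sp, p.1 ⊗ₜ[ℂ] p.2)‖ ^ 2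
        ≤ (C * ‖j (∑ p ∈ sp, p.1 ⊗ₜ[ℂ] p.2)‖) ^ 2 := by
      have h2 : (C * ‖j (∑ p ∈ sp, p.1 ⊗ₜ[ℂ] p.2)‖) ^ 2
          = ‖S‖ ^ 2 * (‖T‖ ^ 2 * ‖j (∑ p ∈ sp, p.1 ⊗ₜ[ℂ] p.2)‖ ^ 2) := by
        rw [hC]; ring
      rw [hkt, h2, hjt]
      calc (∑ p ∈ sp, ∑ q ∈ sp,
            (inner ℂ (S p.1) (S q.1) : ℂ) * (inner ℂ (T p.2) (T q.2) : ℂ)).re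
          ≤ ‖S‖ ^ 2 * (∑ p ∈ sp, ∑ q ∈ sp,
            (inner ℂ p.1 q.1 : ℂ) * (inner ℂ (T p.2) (T q.2) : ℂ)).re := step1
        _ ≤ ‖S‖ ^ 2 * (‖T‖ ^ 2 * (∑ p ∈ sp, ∑ q ∈ sp,
            (inner ℂ p.1 q.1 : ℂ) * (inner ℂ p.2 q.2 : ℂ)).re) :=
          mul_le_mul_of_nonneg_left step2 (by positivity)
    nlinarith [norm_nonneg (k (∑ p ∈ sp, p.1 ⊗ₜ[ℂ] p.2)),
      mul_nonneg hC0 (norm_nonneg (j (∑ p ∈ sp, p.1 ⊗ₜ[ℂ] p.2)))]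
  -- kernel inclusion
  have hker : LinearMap.ker j ≤ LinearMap.ker k := by
    intro t ht
    rw [LinearMap.mem_ker] at ht ⊢
    have h := key t
    rw [ht, norm_zero, mul_zero] at h
    exact norm_le_zero_iff.mp h
  -- the range submodule and its density
  set p : Submodule ℂ HH := LinearMap.range j with hpdef
  have hpspan : Submodule.span ℂ {z : HH | ∃ ξ η, z = ι₁ ξ η} = p := by
    apply le_antisymm
    · rw [Submodule.span_le]
      rintro z ⟨ξ, η, rfl⟩
      exact ⟨ξ ⊗ₜ[ℂ] η, rfl⟩
    · rintro z ⟨t, rfl⟩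
      induction t using TensorProduct.induction_on with
      | zero => simp
      | tmul ξ η => exact Submodule.subset_span ⟨ξ, η, rfl⟩
      | add a b ha hb => rw [map_add]; exact Submodule.add_mem _ ha hb
  have hpdense : Dense (p : Set HH) := by rw [← hpspan]; exact hι₁dense
  -- the factored linear map on the range
  set kbar : (H₁ ⊗[ℂ] H₂ ⧸ LinearMap.ker j) →ₗ[ℂ] KK :=
    Submodule.liftQ (LinearMap.ker j) k hker with hkbar
  set ℓ : p →ₗ[ℂ] KK :=
    kbar.comp (j.quotKerEquivRange.symm : p →ₗ[ℂ] H₁ ⊗[ℂ] H₂ ⧸ LinearMap.ker j) with hℓdef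
  have hℓ : ∀ t : H₁ ⊗[ℂ] H₂, ℓ ⟨j t, ⟨t, rfl⟩⟩ = k t := by
    intro t
    have h1 : j.quotKerEquivRange (Submodule.Quotient.mk t) = ⟨j t, ⟨t, rfl⟩⟩ :=
      Subtype.ext (LinearMap.quotKerEquivRange_apply_mk j t)
    have h2 : j.quotKerEquivRange.symm ⟨j t, ⟨t, rfl⟩⟩ = Submodule.Quotient.mk t := by
      rw [← h1, LinearEquiv.symm_apply_apply]
    simp only [hℓdef, LinearMap.comp_apply, LinearEquiv.coe_coe, h2, hkbar,
      Submodule.liftQ_apply]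
  have hℓb : ∀ z : p, ‖ℓ z‖ ≤ C * ‖z‖ := by
    rintro ⟨z, hz⟩
    obtain ⟨t, rfl⟩ := hz
    rw [hℓ t]
    exact key t
  set ℓc : p →L[ℂ] KK := ℓ.mkContinuous C hℓb with hℓc
  -- extension
  have hpd : DenseRange (p.subtypeL) := by
    have hr : Set.range (p.subtypeL) = (p : Set HH) :=
      Set.ext fun x => ⟨fun ⟨y, hy⟩ => hy ▸ y.2, fun hx => ⟨⟨x, hx⟩, rfl⟩⟩
    rw [DenseRange, hr]
    exact hpdense
  have hpi : IsUniformInducing (p.subtypeL) := isometry_subtype_coe.isUniformInducing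
  set U : HH →L[ℂ] KK := ℓc.extend p.subtypeL with hU
  have hUmem : ∀ (z : HH) (hz : z ∈ p), U z = ℓc ⟨z, hz⟩ := by
    intro z hz
    have := ContinuousLinearMap.extend_eq (f := ℓc) (e := p.subtypeL) hpd hpi ⟨z, hz⟩
    simpa using this
  have hUapp : ∀ (ξ : H₁) (η : H₂), U (ι₁ ξ η) = ι₂ (S ξ) (T η) := by
    intro ξ η
    have hmem : ι₁ ξ η ∈ p := ⟨ξ ⊗ₜ[ℂ] η, rfl⟩
    rw [hUmem (ι₁ ξ η) hmem]
    have : (⟨ι₁ ξ η, hmem⟩ : p) = ⟨j (ξ ⊗ₜ[ℂ] η), ⟨ξ ⊗ₜ[ℂ] η, rfl⟩⟩ := rfl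
    rw [hℓc, LinearMap.mkContinuous_apply, this, hℓ]
    exact hk ξ η
  -- operator norm upper bound
  have hUle : ∀ z : HH, ‖U z‖ ≤ C * ‖z‖ := by
    have hclosed : IsClosed {z : HH | ‖U z‖ ≤ C * ‖z‖} :=
      isClosed_le (continuous_norm.comp U.continuous) (continuous_const.mul continuous_norm)
    have hsub : (p : Set HH) ⊆ {z : HH | ‖U z‖ ≤ C * ‖z‖} := by
      intro z hz
      rw [Set.mem_setOf_eq, hUmem z hz]
      exact hℓb ⟨z, hz⟩
    intro z
    have h1 : closure (p : Set HH) ⊆ {z : HH | ‖U z‖ ≤ C * ‖z‖} :=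
      hclosed.closure_subset_iff.mpr hsub
    rw [hpdense.closure_eq] at h1
    exact h1 (Set.mem_univ z)
  have hUnorm_le : ‖U‖ ≤ C := ContinuousLinearMap.opNorm_le_bound U hC0 hUle
  -- lower bound
  have htensor₁ : ∀ (ξ : H₁) (η : H₂), ‖ι₁ ξ η‖ = ‖ξ‖ * ‖η‖ := by
    intro ξ η
    have hsq : ‖ι₁ ξ η‖ ^ 2 = (‖ξ‖ * ‖η‖) ^ 2 := by
      rw [norm_sq_eq_re_inner' (ι₁ ξ η), hι₁inner, inner_self_ofReal', inner_self_ofReal',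
        ← Complex.ofReal_mul, Complex.ofReal_re]
      ring
    exact (sq_eq_sq₀ (norm_nonneg _) (mul_nonneg (norm_nonneg _) (norm_nonneg _))).mp hsq
  have htensor₂ : ∀ (ξ : K₁) (η : K₂), ‖ι₂ ξ η‖ = ‖ξ‖ * ‖η‖ := by
    intro ξ η
    have hsq : ‖ι₂ ξ η‖ ^ 2 = (‖ξ‖ * ‖η‖) ^ 2 := by
      rw [norm_sq_eq_re_inner' (ι₂ ξ η), hι₂inner, inner_self_ofReal', inner_self_ofReal',
        ← Complex.ofReal_mul, Complex.ofReal_re]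
      ring
    exact (sq_eq_sq₀ (norm_nonneg _) (mul_nonneg (norm_nonneg _) (norm_nonneg _))).mp hsq
  have hbound : ∀ (ξ : H₁) (η : H₂), ‖S ξ‖ * ‖T η‖ ≤ ‖U‖ * (‖ξ‖ * ‖η‖) := by
    intro ξ η
    calc ‖S ξ‖ * ‖T η‖ = ‖ι₂ (S ξ) (T η)‖ := (htensor₂ _ _).symm
      _ = ‖U (ι₁ ξ η)‖ := by rw [hUapp]
      _ ≤ ‖U‖ * ‖ι₁ ξ η‖ := U.le_opNorm _
      _ = ‖U‖ * (‖ξ‖ * ‖η‖) := by rw [htensor₁]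
  have hSη : ∀ η : H₂, ‖S‖ * ‖T η‖ ≤ ‖U‖ * ‖η‖ := by
    intro η
    rcases eq_or_ne ‖T η‖ 0 with h0 | h0
    · rw [h0, mul_zero]
      exact mul_nonneg (norm_nonneg _) (norm_nonneg _)
    · have hpos : 0 < ‖T η‖ := lt_of_le_of_ne (norm_nonneg _) (Ne.symm h0)
      have hSle : ‖S‖ ≤ ‖U‖ * ‖η‖ / ‖T η‖ := by
        refine S.opNorm_le_bound (by positivity) fun ξ => ?_
        rw [div_mul_eq_mul_div, le_div_iff₀ hpos]
        calc ‖S ξ‖ * ‖T η‖ ≤ ‖U‖ * (‖ξ‖ * ‖η‖) := hbound ξ η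
          _ = ‖U‖ * ‖η‖ * ‖ξ‖ := by ring
      calc ‖S‖ * ‖T η‖ ≤ (‖U‖ * ‖η‖ / ‖T η‖) * ‖T η‖ :=
            mul_le_mul_of_nonneg_right hSle (norm_nonneg _)
        _ = ‖U‖ * ‖η‖ := by field_simp
  have hST : ‖S‖ * ‖T‖ ≤ ‖U‖ := by
    rcases eq_or_ne ‖S‖ 0 with h0 | h0
    · rw [h0, zero_mul]; exact norm_nonneg _
    · have hpos : 0 < ‖S‖ := lt_of_le_of_ne (norm_nonneg _) (Ne.symm h0)
      have hTle : ‖T‖ ≤ ‖U‖ / ‖S‖ := by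
        refine T.opNorm_le_bound (by positivity) fun η => ?_
        rw [div_mul_eq_mul_div, le_div_iff₀ hpos]
        calc ‖T η‖ * ‖S‖ = ‖S‖ * ‖T η‖ := by ring
          _ ≤ ‖U‖ * ‖η‖ := hSη η
      calc ‖S‖ * ‖T‖ ≤ ‖S‖ * (‖U‖ / ‖S‖) :=
            mul_le_mul_of_nonneg_left hTle (norm_nonneg _)
        _ = ‖U‖ := by field_simp
  refine ⟨U, hUapp, le_antisymm hUnorm_le hST, ?_⟩
  intro V hV
  refine ContinuousLinearMap.ext_on hι₁dense ?_
  rintro z ⟨ξ, η, rfl⟩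
  rw [hV, hUapp]
end
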